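/- arXiv:2110.01223 — 4 statements merged into one kernel-verified Lean document; each statement's English description precedes it below -/
import Mathlib

section
/- For all $t > 0$, $s > 0$, and $y \in \mathbb{R}$, the oscillatory integral $I(s;y,t) = \int_0^s e^{i(\xi^4+\xi^2)t - i\xi y}\,d\xi$ satisfies $|I(s;y,t)| \le C t^{-1/4}$ for a constant $C > 0$ independent of $y$, $t$, and $s$. -/
open MeasureTheory Complex intervalIntegral

lemma vdc_aux (φ ψ ψ' : ℝ → ℝ) (a b lam : ℝ) (hab : a ≤ b) (hlam : 0 < lam)
    (hφ : ∀ x, HasDerivAt φ (ψ x) x) (hψ : ∀ x, HasDerivAt ψ (ψ' x) x)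
    (hψ'c : Continuous ψ')
    (hpos : ∀ x ∈ Set.Icc a b, lam ≤ ψ x) (hmono : ∀ x ∈ Set.Icc a b, 0 ≤ ψ' x) :
    ‖∫ x in a..b, Complex.exp (Complex.I * φ x)‖ ≤ 3 / lam := by
  have huIcc : Set.uIcc a b = Set.Icc a b := Set.uIcc_of_le hab
  have hψc : Continuous ψ := continuous_iff_continuousAt.2 fun x => (hψ x).continuousAt
  have hφc : Continuous φ := continuous_iff_continuousAt.2 fun x => (hφ x).continuousAt
  have hψpos : ∀ x ∈ Set.Icc a b, 0 < ψ x := fun x hx => lt_of_lt_of_le hlam (hpos x hx)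
  have hne : ∀ x ∈ Set.Icc a b, (Complex.I * (ψ x : ℂ)) ≠ 0 := by
    intro x hx
    simp only [mul_ne_zero_iff, Complex.ofReal_ne_zero]
    exact ⟨Complex.I_ne_zero, (hψpos x hx).ne'⟩
  set u : ℝ → ℂ := fun x => Complex.exp (Complex.I * φ x) with hu_def
  set v : ℝ → ℂ := fun x => -Complex.I * ((ψ x)⁻¹ : ℝ) with hv_def
  set v' : ℝ → ℂ := fun x => -Complex.I * ((-(ψ' x) / ψ x ^ 2 : ℝ)) with hv'_def
  have hud : ∀ x, HasDerivAt u (Complex.I * ψ x * u x) x := by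
    intro x
    have h1 : HasDerivAt (fun x : ℝ => Complex.I * (φ x : ℂ)) (Complex.I * ψ x) x :=
      ((hφ x).ofReal_comp).const_mul Complex.I
    simpa [hu_def, mul_comm] using h1.cexp
  have hvd : ∀ x ∈ Set.Icc a b, HasDerivAt v (v' x) x := by
    intro x hx
    exact ((((hψ x).inv (hψpos x hx).ne')).ofReal_comp).const_mul (-Complex.I)
  have huc : Continuous u := Complex.continuous_exp.comp (continuous_const.mul (Complex.continuous_ofReal.comp hφc))
  have hu'int : IntervalIntegrable (fun x => Complex.I * ψ x * u x) volume a b :=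
    ((continuous_const.mul (Complex.continuous_ofReal.comp hψc)).mul huc).intervalIntegrable a b
  have hv'cont : ContinuousOn v' (Set.Icc a b) := by
    apply ContinuousOn.mul continuousOn_const
    apply Complex.continuous_ofReal.comp_continuousOn
    apply ContinuousOn.div hψ'c.neg.continuousOn (hψc.pow 2).continuousOn
    intro x hx
    exact pow_ne_zero 2 (hψpos x hx).ne'
  have hv'int : IntervalIntegrable v' volume a b := by
    apply ContinuousOn.intervalIntegrable
    rwa [huIcc]
  have hibp : ∫ x in a..b, u x * v' x
      = u b * v b - u a * v a - ∫ x in a..b, (Complex.I * ψ x * u x) * v x := by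
    apply intervalIntegral.integral_mul_deriv_eq_deriv_mul
    · intro x hx; exact hud x
    · intro x hx; rw [huIcc] at hx; exact hvd x hx
    · exact hu'int
    · exact hv'int
  have hcongr : ∫ x in a..b, (Complex.I * ψ x * u x) * v x = ∫ x in a..b, u x := by
    apply integral_congr
    intro x hx
    rw [huIcc] at hx
    show (Complex.I * (ψ x : ℂ) * u x) * v x = u x
    simp only [hv_def]
    have h9 : (ψ x : ℂ) ≠ 0 := Complex.ofReal_ne_zero.2 (hψpos x hx).ne'
    push_cast
    field_simp
    ring_nf
    simp [Complex.I_sq]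
  have key : ∫ x in a..b, u x = u b * v b - u a * v a - ∫ x in a..b, u x * v' x := by
    rw [hibp, hcongr]; ring
  have hnu : ∀ x : ℝ, ‖u x‖ = 1 := by
    intro x
    simp [hu_def, Complex.norm_exp, Complex.mul_re]
  have hnv : ∀ x ∈ Set.Icc a b, ‖v x‖ ≤ lam⁻¹ := by
    intro x hx
    have h1 : ‖v x‖ = (ψ x)⁻¹ := by
      simp [hv_def, map_mul, Complex.norm_I, Complex.norm_real,
        _root_.abs_of_pos (inv_pos.2 (hψpos x hx)), _root_.abs_of_pos (hψpos x hx), (hψpos x hx).le]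
    rw [h1]
    exact inv_anti₀ hlam (hpos x hx)
  -- FTC for ψ'/ψ²
  have hFTCd : ∀ x ∈ Set.uIcc a b, HasDerivAt (fun y => -(ψ y)⁻¹) (ψ' x / (ψ x)^2) x := by
    intro x hx
    rw [huIcc] at hx
    have := ((hψ x).inv (hψpos x hx).ne').neg
    exact this.congr_deriv (by ring)
  have hint2 : IntervalIntegrable (fun x => ψ' x / (ψ x)^2) volume a b := by
    apply ContinuousOn.intervalIntegrable
    rw [huIcc]
    apply ContinuousOn.div hψ'c.continuousOn (hψc.pow 2).continuousOn
    intro x hx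
    exact pow_ne_zero 2 (hψpos x hx).ne'
  have hFTC : ∫ x in a..b, ψ' x / (ψ x)^2 = (ψ a)⁻¹ - (ψ b)⁻¹ := by
    rw [integral_eq_sub_of_hasDerivAt hFTCd hint2]
    ring
  have hbd3 : ‖∫ x in a..b, u x * v' x‖ ≤ lam⁻¹ := by
    have h1 : ‖∫ x in a..b, u x * v' x‖ ≤ ∫ x in a..b, ‖u x * v' x‖ :=
      norm_integral_le_integral_norm hab
    have h2 : ∫ x in a..b, ‖u x * v' x‖ = ∫ x in a..b, ψ' x / (ψ x)^2 := by
      apply integral_congr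
      intro x hx
      rw [huIcc] at hx
      show ‖u x * v' x‖ = ψ' x / ψ x ^ 2
      rw [norm_mul, hnu x, one_mul]
      simp only [hv'_def, norm_mul, norm_neg, Complex.norm_I, one_mul, Complex.norm_real,
        Real.norm_eq_abs, abs_div, abs_neg, _root_.abs_of_nonneg (hmono x hx),
        _root_.abs_of_pos (pow_pos (hψpos x hx) 2)]
    have h3 : (ψ a)⁻¹ - (ψ b)⁻¹ ≤ lam⁻¹ := by
      have ha : a ∈ Set.Icc a b := Set.left_mem_Icc.2 hab
      have hb : b ∈ Set.Icc a b := Set.right_mem_Icc.2 hab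
      have h4 : (ψ a)⁻¹ ≤ lam⁻¹ := inv_anti₀ hlam (hpos a ha)
      have h5 : 0 < (ψ b)⁻¹ := inv_pos.2 (hψpos b hb)
      linarith
    rw [h2, hFTC] at h1
    linarith
  calc ‖∫ x in a..b, u x‖
      ≤ ‖u b * v b‖ + ‖u a * v a‖ + ‖∫ x in a..b, u x * v' x‖ := by
        rw [key]; exact (norm_sub_le _ _).trans (by gcongr; exact norm_sub_le _ _)
    _ ≤ lam⁻¹ + lam⁻¹ + lam⁻¹ := by
        gcongr
        · rw [norm_mul, hnu, one_mul]; exact hnv b (Set.right_mem_Icc.2 hab)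
        · rw [norm_mul, hnu, one_mul]; exact hnv a (Set.left_mem_Icc.2 hab)
    _ = 3 / lam := by field_simp; ring

lemma vdc_aux_neg (φ ψ ψ' : ℝ → ℝ) (a b lam : ℝ) (hab : a ≤ b) (hlam : 0 < lam)
    (hφ : ∀ x, HasDerivAt φ (ψ x) x) (hψ : ∀ x, HasDerivAt ψ (ψ' x) x)
    (hψ'c : Continuous ψ')
    (hneg : ∀ x ∈ Set.Icc a b, ψ x ≤ -lam) (hmono : ∀ x ∈ Set.Icc a b, 0 ≤ ψ' x) :
    ‖∫ x in a..b, Complex.exp (Complex.I * φ x)‖ ≤ 3 / lam := by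
  have h1 : (∫ x in (-b)..(-a), Complex.exp (Complex.I * φ (-x)))
      = ∫ x in a..b, Complex.exp (Complex.I * φ x) := by
    rw [intervalIntegral.integral_comp_neg (fun x => Complex.exp (Complex.I * φ x))]
    norm_num
  rw [← h1]
  have hφ' : ∀ x, HasDerivAt (fun x => φ (-x)) (-ψ (-x)) x := by
    intro x
    have := (hφ (-x)).comp x (hasDerivAt_neg x)
    simpa [Function.comp_def, mul_comm] using this
  have hψ2 : ∀ x, HasDerivAt (fun x => -ψ (-x)) (ψ' (-x)) x := by
    intro x
    have := ((hψ (-x)).comp x (hasDerivAt_neg x)).neg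
    exact this.congr_deriv (by ring)
  apply vdc_aux (fun x => φ (-x)) (fun x => -ψ (-x)) (fun x => ψ' (-x)) (-b) (-a) lam
    (by linarith) hlam hφ' hψ2 (hψ'c.comp continuous_neg)
  · intro x hx
    have : -x ∈ Set.Icc a b := ⟨by linarith [hx.2], by linarith [hx.1]⟩
    linarith [hneg (-x) this]
  · intro x hx
    have : -x ∈ Set.Icc a b := ⟨by linarith [hx.2], by linarith [hx.1]⟩
    exact hmono (-x) this

theorem stmt_0 :
    ∃ C : ℝ, 0 < C ∧ ∀ t s y : ℝ, 0 < t → 0 < s →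
      ‖∫ ξ in (0:ℝ)..s, Complex.exp (Complex.I * (((ξ^4 + ξ^2) * t : ℝ) - ξ * y))‖
        ≤ C * t ^ (-(1/4 : ℝ)) := by
  refine ⟨8, by norm_num, ?_⟩
  intro t s y ht hs
  set δ := t ^ (-(1/4:ℝ)) with hδdef
  have hδ : 0 < δ := Real.rpow_pos_of_pos ht _
  set lam := t ^ ((1/4:ℝ)) with hlamdef
  have hlam : 0 < lam := Real.rpow_pos_of_pos ht _
  have hlameq : t * δ ^ 3 = lam := by
    rw [hδdef, hlamdef, ← Real.rpow_natCast (t ^ (-(1/4:ℝ))) 3, ← Real.rpow_mul ht.le]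
    nth_rewrite 1 [← Real.rpow_one t]
    rw [← Real.rpow_add ht]
    norm_num
  have hlaminv : lam⁻¹ = δ := by
    rw [hδdef, hlamdef, ← Real.rpow_neg ht.le]
  set φ : ℝ → ℝ := fun ξ => (ξ^4 + ξ^2) * t - ξ * y with hφdef
  set ψ : ℝ → ℝ := fun ξ => (4*ξ^3 + 2*ξ) * t - y with hψdef
  set ψ' : ℝ → ℝ := fun ξ => (12*ξ^2 + 2) * t with hψ'def
  have hφd : ∀ ξ, HasDerivAt φ (ψ ξ) ξ := by
    intro ξ
    have h := (((hasDerivAt_pow 4 ξ).add (hasDerivAt_pow 2 ξ)).mul_const t).sub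
      ((hasDerivAt_id ξ).mul_const y)
    exact h.congr_deriv (by simp only [hψdef, id]; push_cast; ring)
  have hψd : ∀ ξ, HasDerivAt ψ (ψ' ξ) ξ := by
    intro ξ
    have h := (((hasDerivAt_pow 3 ξ).const_mul 4).add ((hasDerivAt_id ξ).const_mul 2)).mul_const t
    have h2 := h.sub_const y
    exact h2.congr_deriv (by simp only [hψ'def, id]; push_cast; ring)
  have hψ'c : Continuous ψ' := by fun_prop
  have hψ'pos : ∀ ξ : ℝ, 0 ≤ ψ' ξ := by
    intro ξ
    simp only [hψ'def]
    positivity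
  -- find the stationary point ξ₀
  set R := |y| / (2*t) + 1 with hR
  have hRpos : 0 < R := by positivity
  have h2Rt : 2 * R * t = |y| + 2 * t := by
    rw [hR]; field_simp
  obtain ⟨ξ₀, -, hξ₀⟩ : ∃ ξ₀ ∈ Set.Icc (-R) R, ψ ξ₀ = 0 := by
    have hcont : ContinuousOn ψ (Set.Icc (-R) R) := by fun_prop
    have hsub := intermediate_value_Icc (by linarith : -R ≤ R) hcont
    have h0mem : (0:ℝ) ∈ Set.Icc (ψ (-R)) (ψ R) := by
      constructor
      · simp only [hψdef]
        nlinarith [neg_abs_le y, le_abs_self y, mul_pos (pow_pos hRpos 3) ht]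
      · simp only [hψdef]
        nlinarith [neg_abs_le y, le_abs_self y, mul_pos (pow_pos hRpos 3) ht]
    obtain ⟨ξ₀, hm, he⟩ := hsub h0mem
    exact ⟨ξ₀, hm, he⟩
  have hψξ₀ : (4*ξ₀^3 + 2*ξ₀) * t - y = 0 := hξ₀
  -- derivative lower bounds away from ξ₀
  have hlow : ∀ ξ : ℝ, ξ₀ + δ ≤ ξ → lam ≤ ψ ξ := by
    intro ξ hξ
    have h1 : δ ^ 3 ≤ (ξ - ξ₀)^3 := pow_le_pow_left₀ hδ.le (by linarith) 3
    have h3 : (0:ℝ) ≤ ξ - ξ₀ := by linarith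
    simp only [hψdef]
    nlinarith [mul_le_mul_of_nonneg_left h1 ht.le,
      mul_nonneg (mul_nonneg ht.le h3) (sq_nonneg (ξ + ξ₀))]
  have hup : ∀ ξ : ℝ, ξ ≤ ξ₀ - δ → ψ ξ ≤ -lam := by
    intro ξ hξ
    have h1 : δ ^ 3 ≤ (ξ₀ - ξ)^3 := pow_le_pow_left₀ hδ.le (by linarith) 3
    have h3 : (0:ℝ) ≤ ξ₀ - ξ := by linarith
    simp only [hψdef]
    nlinarith [mul_le_mul_of_nonneg_left h1 ht.le,
      mul_nonneg (mul_nonneg ht.le h3) (sq_nonneg (ξ + ξ₀))]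
  -- split points
  set c := max 0 (min s (ξ₀ - δ)) with hc
  set d := max 0 (min s (ξ₀ + δ)) with hd
  have hc0 : (0:ℝ) ≤ c := le_max_left _ _
  have hcd : c ≤ d := max_le_max le_rfl (min_le_min le_rfl (by linarith))
  have hds : d ≤ s := max_le hs.le (min_le_left _ _)
  set f : ℝ → ℂ := fun ξ => Complex.exp (Complex.I * φ ξ) with hf
  have hfc : Continuous f := by
    apply Complex.continuous_exp.comp
    apply continuous_const.mul
    apply Complex.continuous_ofReal.comp
    fun_prop
  have hintf : ∀ a b : ℝ, IntervalIntegrable f volume a b := fun a b => hfc.intervalIntegrable a b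
  have hnf : ∀ x : ℝ, ‖f x‖ = 1 := by
    intro x
    simp [hf, Complex.norm_exp, Complex.mul_re]
  have hgoal : (∫ ξ in (0:ℝ)..s, Complex.exp (Complex.I * (((ξ^4 + ξ^2) * t : ℝ) - ξ * y)))
      = ∫ ξ in (0:ℝ)..s, f ξ := by
    apply intervalIntegral.integral_congr
    intro x hx
    simp only [hf, hφdef]
    norm_cast
  have hsplit : (∫ ξ in (0:ℝ)..s, f ξ)
      = (∫ ξ in (0:ℝ)..c, f ξ) + (∫ ξ in c..d, f ξ) + (∫ ξ in d..s, f ξ) := by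
    rw [intervalIntegral.integral_add_adjacent_intervals (hintf 0 c) (hintf c d),
      intervalIntegral.integral_add_adjacent_intervals (hintf 0 d) (hintf d s)]
  have hleft : ‖∫ ξ in (0:ℝ)..c, f ξ‖ ≤ 3 / lam := by
    rcases eq_or_lt_of_le hc0 with h | h
    · rw [← h]
      simp only [intervalIntegral.integral_same, norm_zero]
      positivity
    · have hm : 0 < min s (ξ₀ - δ) := by
        by_contra hm
        push_neg at hm
        have : c = 0 := max_eq_left hm
        linarith
      have hpos0 : (0:ℝ) < ξ₀ - δ := lt_of_lt_of_le hm (min_le_right _ _)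
      have hcle : c ≤ ξ₀ - δ := max_le hpos0.le (min_le_right _ _)
      apply vdc_aux_neg φ ψ ψ' 0 c lam hc0 hlam hφd hψd hψ'c
      · intro x hx
        exact hup x (by linarith [hx.2])
      · intro x _
        exact hψ'pos x
  have hright : ‖∫ ξ in d..s, f ξ‖ ≤ 3 / lam := by
    rcases eq_or_lt_of_le hds with h | h
    · rw [h]
      simp only [intervalIntegral.integral_same, norm_zero]
      positivity
    · have hdge : ξ₀ + δ ≤ d := by
        by_cases h2 : s ≤ ξ₀ + δ
        · exfalso
          have : d = s := by rw [hd, min_eq_left h2, max_eq_right hs.le]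
          linarith
        · push_neg at h2
          rw [hd, min_eq_right h2.le]
          exact le_max_right _ _
      apply vdc_aux φ ψ ψ' d s lam hds hlam hφd hψd hψ'c
      · intro x hx
        exact hlow x (by linarith [hx.1])
      · intro x _
        exact hψ'pos x
  have hmid : ‖∫ ξ in c..d, f ξ‖ ≤ 2 * δ := by
    have h1 : ∀ x ∈ Set.uIoc c d, ‖f x‖ ≤ 1 := fun x _ => le_of_eq (hnf x)
    have h2 := intervalIntegral.norm_integral_le_of_norm_le_const h1
    have hdc : d - c ≤ 2 * δ := by
      rcases le_total (ξ₀ + δ) 0 with h1' | h1'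
      · have hd0 : d = 0 := max_eq_left (le_trans (min_le_right _ _) h1')
        linarith
      · rcases le_total s (ξ₀ - δ) with h2' | h2'
        · have hc' : c = s := by rw [hc, min_eq_left h2', max_eq_right hs.le]
          linarith
        · have hd' : d ≤ ξ₀ + δ := max_le h1' (min_le_right _ _)
          have hc'' : ξ₀ - δ ≤ c := by
            rw [hc, min_eq_right h2']
            exact le_max_right _ _
          linarith
    rw [_root_.abs_of_nonneg (by linarith : (0:ℝ) ≤ d - c)] at h2
    linarith
  rw [hgoal, hsplit]
  have h3lam : 3 / lam = 3 * δ := by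
    rw [div_eq_mul_inv, hlaminv]
  calc ‖(∫ ξ in (0:ℝ)..c, f ξ) + (∫ ξ in c..d, f ξ) + (∫ ξ in d..s, f ξ)‖
      ≤ ‖(∫ ξ in (0:ℝ)..c, f ξ)‖ + ‖(∫ ξ in c..d, f ξ)‖ + ‖(∫ ξ in d..s, f ξ)‖ := by
        exact (norm_add_le _ _).trans (by gcongr; exact norm_add_le _ _)
    _ ≤ 3 / lam + 2 * δ + 3 / lam := by gcongr
    _ = 8 * δ := by rw [h3lam]; ring
    _ = 8 * t ^ (-(1/4:ℝ)) := by rw [hδdef]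
end

section
/- For all $t > 0$, $s > 1/\sqrt{2}$, and $\omega \in \mathbb{R}$, the oscillatory integral $I(s;\omega,t) = \int_{1/\sqrt{2}}^s e^{i\xi\omega - i(4\xi^4 - 2\xi^2 + 1/4)t}\,d\xi$ satisfies $|I(s;\omega,t)| \le C t^{-1/4}$ for a constant $C$ independent of $\omega$, $t$, and $s$. -/
set_option maxHeartbeats 1000000

open MeasureTheory Complex Set

noncomputable def ff (t ω ξ : ℝ) : ℂ :=
  Complex.exp (Complex.I * ((ξ * ω : ℝ) - ((4*ξ^4 - 2*ξ^2 + 1/4) * t : ℝ)))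

noncomputable def pp (t ω ξ : ℝ) : ℝ := ω - (16*ξ^3 - 4*ξ)*t
noncomputable def qq (t ξ : ℝ) : ℝ := -((48*ξ^2 - 4)*t)

lemma ff_cont (t ω : ℝ) : Continuous (ff t ω) := by
  unfold ff; fun_prop

lemma pp_cont (t ω : ℝ) : Continuous (pp t ω) := by
  unfold pp; fun_prop

lemma qq_cont (t : ℝ) : Continuous (qq t) := by
  unfold qq; fun_prop

lemma ff_norm (t ω ξ : ℝ) : ‖ff t ω ξ‖ = 1 := by
  unfold ff
  rw [show ((ξ * ω : ℝ) : ℂ) - ((4*ξ^4 - 2*ξ^2 + 1/4) * t : ℝ)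
      = ((ξ * ω - (4*ξ^4 - 2*ξ^2 + 1/4) * t : ℝ) : ℂ) by push_cast; ring,
    mul_comm]
  exact Complex.norm_exp_ofReal_mul_I _

lemma ff_hasDeriv (t ω x : ℝ) :
    HasDerivAt (ff t ω) (Complex.I * (pp t ω x) * ff t ω x) x := by
  have h1 : HasDerivAt (fun ξ : ℝ => ξ * ω - (4*ξ^4 - 2*ξ^2 + 1/4) * t)
      (pp t ω x) x := by
    have := ((hasDerivAt_id x).mul_const ω).sub
      ((((hasDerivAt_pow 4 x).const_mul 4).sub
        ((hasDerivAt_pow 2 x).const_mul 2)).add_const (1/4) |>.mul_const t)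
    refine this.congr_deriv ?_
    unfold pp; push_cast; ring
  have h2 : HasDerivAt (fun ξ : ℝ => Complex.I * ((ξ * ω - (4*ξ^4 - 2*ξ^2 + 1/4) * t : ℝ) : ℂ))
      (Complex.I * (pp t ω x)) x := (h1.ofReal_comp).const_mul Complex.I
  have h3 := h2.cexp
  have : ff t ω = fun ξ : ℝ => Complex.exp (Complex.I * ((ξ * ω - (4*ξ^4 - 2*ξ^2 + 1/4) * t : ℝ) : ℂ)) := by
    funext ξ; unfold ff; push_cast; ring_nf
  rw [this]
  convert h3 using 1
  rw [mul_comm]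

lemma lemA (t ω c d δ : ℝ) (hc : 1/2 ≤ c) (hcd : c ≤ d) (hδ : 0 < δ) (ht : 0 < t)
    (hsign : (∀ ξ ∈ Set.Icc c d, δ ≤ pp t ω ξ) ∨ (∀ ξ ∈ Set.Icc c d, pp t ω ξ ≤ -δ)) :
    ‖∫ ξ in c..d, ff t ω ξ‖ ≤ 4 / δ := by
  have habs : ∀ ξ ∈ Set.Icc c d, δ ≤ |pp t ω ξ| := by
    intro ξ hξ
    rcases hsign with h | h
    · exact (h ξ hξ).trans (le_abs_self _)
    · have := h ξ hξ; rw [abs_of_nonpos (by linarith)]; linarith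
  have hne : ∀ ξ ∈ Set.Icc c d, pp t ω ξ ≠ 0 := by
    intro ξ hξ h0
    have := habs ξ hξ; rw [h0] at this; simp at this; linarith
  have hqneg : ∀ ξ ∈ Set.Icc c d, qq t ξ ≤ 0 := by
    intro ξ hξ
    have h1 : 1/2 ≤ ξ := le_trans hc hξ.1
    have h2 : 0 ≤ (48*ξ^2-4)*t := mul_nonneg (by nlinarith) ht.le
    unfold qq; linarith
  -- g = ff / (I * pp)
  set g : ℝ → ℂ := fun x => ff t ω x / (Complex.I * (pp t ω x)) with hg
  have hgderiv : ∀ x ∈ Set.Icc c d,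
      HasDerivAt g (ff t ω x + Complex.I * (qq t x) / ((pp t ω x : ℂ))^2 * ff t ω x) x := by
    intro x hx
    have hpx : ((pp t ω x : ℝ) : ℂ) ≠ 0 := by
      simpa using hne x hx
    have hden : Complex.I * (pp t ω x) ≠ 0 := mul_ne_zero Complex.I_ne_zero hpx
    have hppd : HasDerivAt (fun y : ℝ => ((pp t ω y : ℝ) : ℂ)) (qq t x) x := by
      have : HasDerivAt (pp t ω) (qq t x) x := by
        have := (hasDerivAt_const x ω).sub
          ((((hasDerivAt_pow 3 x).const_mul 16).sub ((hasDerivAt_id x).const_mul 4)).mul_const t)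
        refine this.congr_deriv ?_
        unfold qq; push_cast; ring
      exact this.ofReal_comp
    have hdend : HasDerivAt (fun y : ℝ => Complex.I * ((pp t ω y : ℝ) : ℂ)) (Complex.I * (qq t x)) x :=
      hppd.const_mul Complex.I
    have := (ff_hasDeriv t ω x).div hdend hden
    refine this.congr_deriv ?_
    have hI2 : (Complex.I)^2 = -1 := Complex.I_sq
    field_simp
    ring_nf
    rw [hI2]
    ring
  have hcont2 : ContinuousOn (fun x => Complex.I * (qq t x) / ((pp t ω x : ℂ))^2 * ff t ω x) (Set.Icc c d) := by
    apply ContinuousOn.mul _ (ff_cont t ω).continuousOn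
    apply ContinuousOn.div
    · exact (continuous_const.mul ((Complex.continuous_ofReal.comp (qq_cont t)))).continuousOn
    · exact ((Complex.continuous_ofReal.comp (pp_cont t ω)).pow 2).continuousOn
    · intro x hx
      have : ((pp t ω x : ℝ) : ℂ) ≠ 0 := by simpa using hne x hx
      exact pow_ne_zero 2 this
  have hint2 : IntervalIntegrable (fun x => Complex.I * (qq t x) / ((pp t ω x : ℂ))^2 * ff t ω x)
      volume c d := (hcont2.mono (by rw [Set.uIcc_of_le hcd])).intervalIntegrable
  have hintf : IntervalIntegrable (ff t ω) volume c d := (ff_cont t ω).intervalIntegrable c d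
  have hFTC := intervalIntegral.integral_eq_sub_of_hasDerivAt
    (f := g) (fun x hx => hgderiv x (by rwa [Set.uIcc_of_le hcd] at hx))
    ((hintf.add hint2))
  rw [intervalIntegral.integral_add hintf hint2] at hFTC
  have hsplit : (∫ ξ in c..d, ff t ω ξ) = (g d - g c) - ∫ x in c..d, Complex.I * (qq t x) / ((pp t ω x : ℂ))^2 * ff t ω x := by
    rw [← hFTC]; ring
  -- norm of g
  have hgnorm : ∀ x ∈ Set.Icc c d, ‖g x‖ ≤ 1/δ := by
    intro x hx
    rw [hg]
    simp only [norm_div, norm_mul, Complex.norm_I, one_mul, Complex.norm_real, Real.norm_eq_abs,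
      ff_norm]
    rw [div_le_div_iff₀ (lt_of_lt_of_le hδ (habs x hx)) hδ]
    have := habs x hx; linarith
  -- integral of norm of remainder
  have hremnorm : Set.EqOn (fun x => ‖Complex.I * (qq t x) / ((pp t ω x : ℂ))^2 * ff t ω x‖)
      (fun x => -qq t x / (pp t ω x)^2) (Set.uIcc c d) := by
    intro x hx
    rw [Set.uIcc_of_le hcd] at hx
    simp only [norm_mul, norm_div, norm_pow, Complex.norm_I, one_mul, ff_norm, mul_one,
      Complex.norm_real, Real.norm_eq_abs]
    rw [abs_of_nonpos (hqneg x hx), _root_.sq_abs]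
  have hinvderiv : ∀ x ∈ Set.uIcc c d, HasDerivAt (fun y => (pp t ω y)⁻¹) (-qq t x / (pp t ω x)^2) x := by
    intro x hx
    rw [Set.uIcc_of_le hcd] at hx
    have : HasDerivAt (pp t ω) (qq t x) x := by
      have := (hasDerivAt_const x ω).sub
        ((((hasDerivAt_pow 3 x).const_mul 16).sub ((hasDerivAt_id x).const_mul 4)).mul_const t)
      refine this.congr_deriv ?_
      unfold qq; push_cast; ring
    exact this.inv (hne x hx)
  have hcont3 : ContinuousOn (fun x => -qq t x / (pp t ω x)^2) (Set.Icc c d) := by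
    apply ContinuousOn.div ((qq_cont t).neg.continuousOn) (((pp_cont t ω).pow 2).continuousOn)
    intro x hx
    exact pow_ne_zero 2 (hne x hx)
  have hFTC2 := intervalIntegral.integral_eq_sub_of_hasDerivAt hinvderiv
    ((hcont3.mono (by rw [Set.uIcc_of_le hcd])).intervalIntegrable)
  have hrembound : ‖∫ x in c..d, Complex.I * (qq t x) / ((pp t ω x : ℂ))^2 * ff t ω x‖ ≤ 2/δ := by
    calc ‖∫ x in c..d, Complex.I * (qq t x) / ((pp t ω x : ℂ))^2 * ff t ω x‖
        ≤ ∫ x in c..d, ‖Complex.I * (qq t x) / ((pp t ω x : ℂ))^2 * ff t ω x‖ :=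
          intervalIntegral.norm_integral_le_integral_norm hcd
      _ = ∫ x in c..d, -qq t x / (pp t ω x)^2 := intervalIntegral.integral_congr hremnorm
      _ = (pp t ω d)⁻¹ - (pp t ω c)⁻¹ := hFTC2
      _ ≤ 2/δ := by
          have hd2 := habs d (by constructor <;> [exact hcd; rfl])
          have hc2 := habs c (by constructor <;> [rfl; exact hcd])
          have h1 : |(pp t ω d)⁻¹| ≤ 1/δ := by
            rw [abs_inv, ← one_div]
            exact one_div_le_one_div_of_le hδ hd2
          have h2 : |(pp t ω c)⁻¹| ≤ 1/δ := by
            rw [abs_inv, ← one_div]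
            exact one_div_le_one_div_of_le hδ hc2
          have := abs_le.mp h1; have := abs_le.mp h2
          have e1 := (abs_le.mp h1).2; have e2 := (abs_le.mp h2).1
          have : 2/δ = 1/δ + 1/δ := by ring
          linarith
  rw [hsplit]
  have := hgnorm c (by constructor <;> [rfl; exact hcd])
  have := hgnorm d (by constructor <;> [exact hcd; rfl])
  calc ‖g d - g c - _‖ ≤ ‖g d - g c‖ + ‖_‖ := norm_sub_le _ _
    _ ≤ ‖g d‖ + ‖g c‖ + ‖_‖ := by gcongr; exact norm_sub_le _ _
    _ ≤ 1/δ + 1/δ + 2/δ := by gcongr <;> assumption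
    _ = 4/δ := by ring

lemma lemB (t ω a b : ℝ) (ht : 0 < t) (ha : 1/2 ≤ a) (hab : a ≤ b) :
    ‖∫ ξ in a..b, ff t ω ξ‖ ≤ 10 / Real.sqrt ((48*a^2 - 4)*t) := by
  have hμ : 0 < (48*a^2 - 4)*t :=
    mul_pos (by nlinarith [sq_nonneg (a - 1/2)]) ht
  set μ := (48*a^2 - 4)*t with hμdef
  set δ := Real.sqrt μ with hδdef
  have hδ : 0 < δ := Real.sqrt_pos.mpr hμ
  have hδ2 : δ^2 = μ := Real.sq_sqrt hμ.le
  -- key monotonicity estimate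
  have K : ∀ x y : ℝ, a ≤ x → x ≤ y → μ * (y - x) ≤ pp t ω x - pp t ω y := by
    intro x y hax hxy
    have hx0 : (0:ℝ) < x := by linarith
    have h1 : a^2 ≤ x^2 := by nlinarith
    have h2 : a^2 ≤ x*y := by nlinarith
    have h3 : a^2 ≤ y^2 := by nlinarith
    have h4 : 0 ≤ t*(y - x)*(16*x^2 + 16*x*y + 16*y^2 - 48*a^2) :=
      mul_nonneg (mul_nonneg ht.le (by linarith)) (by linarith)
    unfold pp
    nlinarith [h4]
  have hppcont : ContinuousOn (pp t ω) (Set.Icc a b) := (pp_cont t ω).continuousOn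
  by_cases hb1 : δ ≤ pp t ω b
  · have := lemA t ω a b δ ha hab hδ ht (Or.inl (fun ξ hξ => by
      have := K ξ b hξ.1 hξ.2
      nlinarith [mul_nonneg (le_of_lt hμ) (sub_nonneg.2 hξ.2)]))
    calc ‖∫ ξ in a..b, ff t ω ξ‖ ≤ 4/δ := this
      _ ≤ 10/δ := by gcongr <;> norm_num
  by_cases ha1 : pp t ω a ≤ -δ
  · have := lemA t ω a b δ ha hab hδ ht (Or.inr (fun ξ hξ => by
      have := K a ξ le_rfl hξ.1
      nlinarith [mul_nonneg (le_of_lt hμ) (sub_nonneg.2 hξ.1)]))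
    calc ‖∫ ξ in a..b, ff t ω ξ‖ ≤ 4/δ := this
      _ ≤ 10/δ := by gcongr <;> norm_num
  push_neg at hb1 ha1
  -- construct c1
  have hC1 : ∃ c1, a ≤ c1 ∧ c1 ≤ b ∧ pp t ω c1 ≤ δ ∧ -δ ≤ pp t ω c1 ∧
      ‖∫ ξ in a..c1, ff t ω ξ‖ ≤ 4/δ := by
    by_cases hpa : δ ≤ pp t ω a
    · obtain ⟨c1, hc1mem, hc1val⟩ := intermediate_value_Icc' hab hppcont
        (Set.mem_Icc.mpr ⟨hb1.le, hpa⟩)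
      refine ⟨c1, hc1mem.1, hc1mem.2, hc1val.le, by rw [hc1val]; linarith, ?_⟩
      refine lemA t ω a c1 δ ha hc1mem.1 hδ ht (Or.inl (fun ξ hξ => ?_))
      have hK := K ξ c1 hξ.1 hξ.2
      have h0 : 0 ≤ μ * (c1 - ξ) := mul_nonneg hμ.le (by linarith [hξ.2])
      linarith [hc1val ▸ hK]
    · push_neg at hpa
      exact ⟨a, le_rfl, hab, hpa.le, ha1.le, by
        rw [intervalIntegral.integral_same]; rw [norm_zero]; positivity⟩
  obtain ⟨c1, hac1, hc1b, hppc1, hppc1lo, hbd1⟩ := hC1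
  -- construct c2 on [c1, b]
  have hC2 : ∃ c2, c1 ≤ c2 ∧ c2 ≤ b ∧ -δ ≤ pp t ω c2 ∧
      ‖∫ ξ in c2..b, ff t ω ξ‖ ≤ 4/δ := by
    by_cases hpb : pp t ω b < -δ
    · have hppc1' : -δ ≤ pp t ω c1 := hppc1lo
      obtain ⟨c2, hc2mem, hc2val⟩ := intermediate_value_Icc' hc1b
        ((pp_cont t ω).continuousOn) (Set.mem_Icc.mpr ⟨hpb.le, hppc1'⟩)
      refine ⟨c2, hc2mem.1, hc2mem.2, hc2val.ge, ?_⟩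
      refine lemA t ω c2 b δ (by linarith [hc2mem.1]) hc2mem.2 hδ ht (Or.inr (fun ξ hξ => ?_))
      have hK := K c2 ξ (by linarith [hc2mem.1]) hξ.1
      have h0 : 0 ≤ μ * (ξ - c2) := mul_nonneg hμ.le (by linarith [hξ.1])
      linarith [hc2val ▸ hK]
    · push_neg at hpb
      exact ⟨b, hc1b, le_rfl, hpb, by
        rw [intervalIntegral.integral_same]; rw [norm_zero]; positivity⟩
  obtain ⟨c2, hc1c2, hc2b, hppc2, hbd2⟩ := hC2
  -- middle bound
  have hlen : c2 - c1 ≤ 2*δ/μ := by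
    have hK := K c1 c2 hac1 hc1c2
    rw [le_div_iff₀ hμ]
    nlinarith
  have hbdmid : ‖∫ ξ in c1..c2, ff t ω ξ‖ ≤ 2*δ/μ := by
    have := intervalIntegral.norm_integral_le_of_norm_le_const
      (C := 1) (a := c1) (b := c2) (f := ff t ω) (fun x _ => le_of_eq (ff_norm t ω x))
    rw [_root_.abs_of_nonneg (by linarith : (0:ℝ) ≤ c2 - c1)] at this
    linarith
  have hint1 : IntervalIntegrable (ff t ω) volume a c1 := (ff_cont t ω).intervalIntegrable _ _
  have hint2 : IntervalIntegrable (ff t ω) volume c1 c2 := (ff_cont t ω).intervalIntegrable _ _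
  have hint3 : IntervalIntegrable (ff t ω) volume c2 b := (ff_cont t ω).intervalIntegrable _ _
  have hsplit : (∫ ξ in a..b, ff t ω ξ) =
      (∫ ξ in a..c1, ff t ω ξ) + (∫ ξ in c1..c2, ff t ω ξ) + (∫ ξ in c2..b, ff t ω ξ) := by
    rw [intervalIntegral.integral_add_adjacent_intervals hint1 hint2,
      intervalIntegral.integral_add_adjacent_intervals (hint1.trans hint2) hint3]
  have h2δμ : 2*δ/μ = 2/δ := by
    rw [← hδ2]
    field_simp
  rw [hsplit]
  calc ‖_ + _ + _‖ ≤ ‖(∫ ξ in a..c1, ff t ω ξ) + (∫ ξ in c1..c2, ff t ω ξ)‖ + ‖∫ ξ in c2..b, ff t ω ξ‖ :=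
        norm_add_le _ _
    _ ≤ ‖∫ ξ in a..c1, ff t ω ξ‖ + ‖∫ ξ in c1..c2, ff t ω ξ‖ + ‖∫ ξ in c2..b, ff t ω ξ‖ := by
        gcongr; exact norm_add_le _ _
    _ ≤ 4/δ + 2*δ/μ + 4/δ := by gcongr
    _ = 10/δ := by rw [h2δμ]; ring
theorem stmt_1 :
    ∃ C : ℝ, 0 < C ∧ ∀ t s ω : ℝ, 0 < t → 1 / Real.sqrt 2 < s →
      ‖∫ ξ in (1 / Real.sqrt 2 : ℝ)..s,
          Complex.exp (Complex.I * ((ξ * ω : ℝ) - ((4*ξ^4 - 2*ξ^2 + 1/4) * t : ℝ)))‖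
        ≤ C * t ^ (-(1/4 : ℝ)) := by
  refine ⟨3, by norm_num, ?_⟩
  intro t s ω ht hs
  set a : ℝ := 1 / Real.sqrt 2 with hadef
  have hs2 : (0:ℝ) < Real.sqrt 2 := Real.sqrt_pos.mpr (by norm_num)
  have hs2sq : Real.sqrt 2 ^ 2 = 2 := Real.sq_sqrt (by norm_num)
  have hs2' : Real.sqrt 2 ≤ 2 := by nlinarith
  have ha : 1/2 ≤ a := by
    rw [hadef]
    rw [div_le_div_iff₀ (by norm_num) hs2]
    linarith
  have ha0 : 0 < a := by linarith
  have haa : a^2 = 1/2 := by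
    rw [hadef, div_pow, one_pow, hs2sq]
  set T : ℝ := Real.sqrt (Real.sqrt t) with hTdef
  have hst : 0 < Real.sqrt t := Real.sqrt_pos.mpr ht
  have hT : 0 < T := Real.sqrt_pos.mpr hst
  have hT2 : T^2 = Real.sqrt t := Real.sq_sqrt hst.le
  have hT4 : (T^2)^2 = t := by rw [hT2]; exact Real.sq_sqrt ht.le
  have hrpow : t ^ (-(1/4:ℝ)) = 1/T := by
    have hTr : T = t ^ (1/4:ℝ) := by
      rw [hTdef, Real.sqrt_eq_rpow, Real.sqrt_eq_rpow, ← Real.rpow_mul ht.le]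
      norm_num
    rw [Real.rpow_neg ht.le, ← hTr, one_div]
  rw [hrpow]
  have hgoal : (3:ℝ) * (1/T) = 3/T := by ring
  rw [hgoal]
  set A : ℝ := max a (1/T) with hAdef
  have hAa : a ≤ A := le_max_left _ _
  have hAT : 1/T ≤ A := le_max_right _ _
  have hA12 : 1/2 ≤ A := le_trans ha hAa
  have hAbound : A ≤ a + 1/T :=
    max_le (le_add_of_nonneg_right (by positivity)) (le_add_of_nonneg_left ha0.le)
  clear_value a T A
  by_cases hsA : s ≤ A
  · -- short interval: trivial bound
    have h1 := intervalIntegral.norm_integral_le_of_norm_le_const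
      (C := 1) (a := a) (b := s) (f := ff t ω) (fun x _ => le_of_eq (ff_norm t ω x))
    rw [_root_.abs_of_nonneg (by linarith : (0:ℝ) ≤ s - a)] at h1
    have : ‖∫ ξ in a..s, ff t ω ξ‖ ≤ 3/T := by
      have h3 : s - a ≤ 1/T := by linarith
      have hTpos : (0:ℝ) < 1/T := by positivity
      calc ‖∫ ξ in a..s, ff t ω ξ‖ ≤ 1 * (s - a) := h1
        _ ≤ 1/T := by linarith
        _ ≤ 3/T := by
            rw [div_le_div_iff₀ hT hT]; nlinarith
    exact this
  · push_neg at hsA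
    have hint1 : IntervalIntegrable (ff t ω) volume a A := (ff_cont t ω).intervalIntegrable _ _
    have hint2 : IntervalIntegrable (ff t ω) volume A s := (ff_cont t ω).intervalIntegrable _ _
    have hsplit : (∫ ξ in a..s, ff t ω ξ) = (∫ ξ in a..A, ff t ω ξ) + ∫ ξ in A..s, ff t ω ξ :=
      (intervalIntegral.integral_add_adjacent_intervals hint1 hint2).symm
    have hb1 : ‖∫ ξ in a..A, ff t ω ξ‖ ≤ 1/T := by
      have h1 := intervalIntegral.norm_integral_le_of_norm_le_const
        (C := 1) (a := a) (b := A) (f := ff t ω) (fun x _ => le_of_eq (ff_norm t ω x))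
      rw [_root_.abs_of_nonneg (by linarith : (0:ℝ) ≤ A - a)] at h1
      calc ‖∫ ξ in a..A, ff t ω ξ‖ ≤ 1 * (A - a) := h1
        _ ≤ 1/T := by linarith
    have hb2 : ‖∫ ξ in A..s, ff t ω ξ‖ ≤ 2/T := by
      have h2 := lemB t ω A s ht hA12 hsA.le
      have hA2a : 1/2 ≤ A^2 := by nlinarith [hAa, ha0]
      have hA2T : 1/T^2 ≤ A^2 := by
        have : (1/T)^2 ≤ A^2 := by nlinarith [hAT, hT]
        calc 1/T^2 = (1/T)^2 := by ring
          _ ≤ A^2 := this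
      have hATprod : 1 ≤ A^2 * T^2 := by
        rw [div_le_iff₀ (by positivity)] at hA2T
        linarith
      have h48 : 25*T^2 ≤ (48*A^2 - 4)*t := by
        rw [← hT4]
        have hu : (0:ℝ) ≤ T^2 := sq_nonneg T
        have h1 : 0 ≤ (A^2*T^2 - 1) * T^2 := mul_nonneg (by linarith) hu
        have h2 : 0 ≤ (A^2 - 1/2) * (T^2*T^2) := mul_nonneg (by linarith) (mul_nonneg hu hu)
        nlinarith [h1, h2, hu]
      have hsqrt : 5*T ≤ Real.sqrt ((48*A^2 - 4)*t) := by
        have := Real.sqrt_le_sqrt h48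
        rwa [show 25*T^2 = (5*T)^2 by ring, Real.sqrt_sq (by positivity)] at this
      calc ‖∫ ξ in A..s, ff t ω ξ‖ ≤ 10 / Real.sqrt ((48*A^2 - 4)*t) := h2
        _ ≤ 10 / (5*T) := by
            apply div_le_div_of_nonneg_left (by norm_num) (by positivity) hsqrt
        _ = 2/T := by
            rw [div_eq_div_iff (by positivity) (by positivity)]; ring
    have : ‖∫ ξ in a..s, ff t ω ξ‖ ≤ 3/T := by
      rw [hsplit]
      calc ‖_ + _‖ ≤ ‖∫ ξ in a..A, ff t ω ξ‖ + ‖∫ ξ in A..s, ff t ω ξ‖ := norm_add_le _ _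
        _ ≤ 1/T + 2/T := by gcongr
        _ = 3/T := by ring
    exact this
end

section
/- The kernel $K_1(y;x,t) = \int_0^\infty e^{-sx + i(s^4+s^2)t - isy}\, ds$ satisfies $|K_1(y;x,t)| \le C t^{-1/4}$ for all $x > 0$, $t > 0$, $y \in \mathbb{R}$, with $C$ independent of $x, y, t$. -/
open MeasureTheory Set Complex intervalIntegral

noncomputable def K (x t y : ℝ) (s : ℝ) : ℂ :=
  Complex.exp (-(s * x : ℝ) + Complex.I * (((s^4 + s^2) * t : ℝ) - s * y))

lemma exp_norm_aux (a b : ℝ) : ‖Complex.exp (↑a + Complex.I * ↑b)‖ = Real.exp a := by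
  simp [Complex.norm_exp]

lemma norm_exp_I_mul (b : ℝ) : ‖Complex.exp (Complex.I * b)‖ = 1 := by
  simpa using exp_norm_aux 0 b

lemma K_arg (x t y s : ℝ) :
    K x t y s = Complex.exp (↑(-(s * x)) + Complex.I * ↑((s^4 + s^2) * t - s * y)) := by
  rw [K]; norm_cast

lemma norm_K (x t y s : ℝ) : ‖K x t y s‖ = Real.exp (-(s * x)) := by
  rw [K_arg, exp_norm_aux]

lemma K_eq (x t y s : ℝ) :
    K x t y s = (Real.exp (-(s * x)) : ℝ) * Complex.exp (Complex.I * ((s^4 + s^2) * t - s * y : ℝ)) := by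
  rw [K_arg, Complex.ofReal_exp, ← Complex.exp_add]

lemma phase_hasDeriv (t y s : ℝ) :
    HasDerivAt (fun s : ℝ => (s^4 + s^2) * t - s * y) ((4*s^3 + 2*s)*t - y) s := by
  have h : HasDerivAt (fun s : ℝ => (s^4 + s^2) * t - s * y)
      (((4:ℕ)*s^(4-1) + (2:ℕ)*s^(2-1)) * t - 1 * y) s :=
    (((hasDerivAt_pow 4 s).add (hasDerivAt_pow 2 s)).mul_const t).sub
      ((hasDerivAt_id s).mul_const y)
  convert h using 1
  push_cast
  ring

lemma psi_hasDeriv (t y s : ℝ) :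
    HasDerivAt (fun s : ℝ => (4*s^3 + 2*s)*t - y) ((12*s^2 + 2)*t) s := by
  have h : HasDerivAt (fun s : ℝ => (4*s^3 + 2*s)*t - y)
      ((4 * ((3:ℕ)*s^(3-1)) + 2 * 1) * t) s :=
    ((((hasDerivAt_pow 3 s).const_mul 4).add ((hasDerivAt_id s).const_mul 2)).mul_const t).sub_const y
  convert h using 1
  push_cast
  ring

lemma g_hasDeriv (x s : ℝ) :
    HasDerivAt (fun s : ℝ => Real.exp (-(s * x))) (-x * Real.exp (-(s * x))) s := by
  have h := (((hasDerivAt_id s).mul_const x).neg).exp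
  simp only [id_eq, Pi.neg_apply] at h
  convert h using 1
  ring

lemma ibp_bound (x t y : ℝ) (hx : 0 < x) (ht : 0 < t) {lam α β : ℝ} (hlam : 0 < lam)
    (hα : 0 ≤ α) (hαβ : α ≤ β)
    (hsgn : (∀ s ∈ Icc α β, lam ≤ (4*s^3+2*s)*t - y) ∨
            (∀ s ∈ Icc α β, (4*s^3+2*s)*t - y ≤ -lam)) :
    ‖∫ s in α..β, K x t y s‖ ≤ 5 / lam := by
  set ψ : ℝ → ℝ := fun s => (4*s^3+2*s)*t - y with hψ
  set ψ' : ℝ → ℝ := fun s => (12*s^2+2)*t with hψ'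
  set g : ℝ → ℝ := fun s => Real.exp (-(s * x)) with hg
  have hψ'pos : ∀ s, 0 < ψ' s := by
    intro s; rw [hψ']; positivity
  have hg1 : ∀ s, α ≤ s → g s ≤ 1 := by
    intro s hs
    exact Real.exp_le_one_iff.mpr (by nlinarith)
  have hgpos : ∀ s, 0 < g s := fun s => Real.exp_pos _
  have habs : ∀ s ∈ Icc α β, lam ≤ |ψ s| := by
    rcases hsgn with h | h
    · have h' : ∀ s ∈ Icc α β, lam ≤ ψ s := h
      intro s hs; rw [abs_of_pos (lt_of_lt_of_le hlam (h' s hs))]; exact h' s hs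
    · have h' : ∀ s ∈ Icc α β, ψ s ≤ -lam := h
      intro s hs
      rw [abs_of_neg (by linarith [h' s hs])]
      linarith [h' s hs]
  have hne : ∀ s ∈ Icc α β, ψ s ≠ 0 := fun s hs => by
    have := habs s hs; intro h0; rw [h0] at this; simp at this; linarith
  have hIne : ∀ s ∈ Icc α β, (Complex.I * (ψ s : ℂ)) ≠ 0 := fun s hs => by
    simp [Complex.ext_iff, Complex.I_ne_zero, hne s hs]
  set u : ℝ → ℂ := fun s => (g s : ℂ) / (Complex.I * (ψ s : ℂ)) with hu
  set v : ℝ → ℂ := fun s => Complex.exp (Complex.I * ((s^4 + s^2) * t - s * y : ℝ)) with hv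
  set u' : ℝ → ℂ := fun s =>
    (((-x * g s : ℝ) : ℂ) * (Complex.I * (ψ s : ℂ)) - (g s : ℂ) * (Complex.I * (ψ' s : ℂ)))
      / (Complex.I * (ψ s : ℂ))^2 with hu'
  set v' : ℝ → ℂ := fun s => Complex.I * (ψ s : ℂ) * v s with hv'
  have hudAt : ∀ s ∈ Icc α β, HasDerivAt u (u' s) s := by
    intro s hs
    exact ((g_hasDeriv x s).ofReal_comp).div (((psi_hasDeriv t y s).ofReal_comp).const_mul Complex.I)
      (hIne s hs)
  have hvdAt : ∀ s : ℝ, HasDerivAt v (v' s) s := by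
    intro s
    have h1 : HasDerivAt (fun s : ℝ => Complex.I * (((s^4 + s^2) * t - s * y : ℝ) : ℂ))
        (Complex.I * (ψ s : ℂ)) s := ((phase_hasDeriv t y s).ofReal_comp).const_mul Complex.I
    have := h1.cexp
    rw [hv', hv]
    convert this using 1
    ring
  have huIcc : Set.uIcc α β = Icc α β := uIcc_of_le hαβ
  have hψc : Continuous ψ := by rw [hψ]; fun_prop
  have hψ'c : Continuous ψ' := by rw [hψ']; fun_prop
  have hgc : Continuous g := by rw [hg]; fun_prop
  have hvc : Continuous v := by rw [hv]; fun_prop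
  have hu'c : ContinuousOn u' (Icc α β) := by
    rw [hu']
    apply ContinuousOn.div
    · fun_prop
    · fun_prop
    · intro s hs
      exact pow_ne_zero 2 (hIne s hs)
  have hu'int : IntervalIntegrable u' volume α β := by
    apply ContinuousOn.intervalIntegrable; rwa [huIcc]
  have hv'int : IntervalIntegrable v' volume α β := by
    apply Continuous.intervalIntegrable; rw [hv']; fun_prop
  have hcancel : ∀ s ∈ Icc α β, u s * v' s = (g s : ℂ) * v s := by
    intro s hs
    show (g s : ℂ) / (Complex.I * (ψ s : ℂ)) * (Complex.I * (ψ s : ℂ) * v s) = _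
    rw [div_mul_eq_mul_div, mul_comm (Complex.I * ((ψ s : ℝ):ℂ)) (v s), ← mul_assoc,
      mul_div_assoc, div_self (hIne s hs), mul_one]
  have hK : ∀ s ∈ Set.uIcc α β, K x t y s = u s * v' s := by
    intro s hs
    rw [huIcc] at hs
    rw [K_eq, hcancel s hs]
  have ibp := intervalIntegral.integral_mul_deriv_eq_deriv_mul
      (fun s hs => hudAt s (huIcc ▸ hs)) (fun s _ => hvdAt s) hu'int hv'int
  rw [intervalIntegral.integral_congr hK, ibp]
  have hnv : ∀ s : ℝ, ‖v s‖ = 1 := fun s => norm_exp_I_mul _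
  have hnu : ∀ s ∈ Icc α β, ‖u s‖ ≤ 1 / lam := by
    intro s hs
    rw [hu]
    simp only [norm_div, norm_mul, Complex.norm_I, Complex.norm_real, Real.norm_eq_abs, one_mul]
    rw [abs_of_pos (hgpos s)]
    exact div_le_div₀ (by norm_num) (hg1 s hs.1) hlam (habs s hs)
  -- pointwise bound on u' * v
  have hpt : ∀ s ∈ Icc α β, ‖u' s * v s‖ ≤ x * g s / lam + ψ' s / (ψ s)^2 := by
    intro s hs
    rw [norm_mul, hnv, mul_one, hu', norm_div]
    have hψ2 : ‖(Complex.I * ((ψ s : ℝ):ℂ))^2‖ = (ψ s)^2 := by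
      rw [norm_pow, norm_mul]
      simp [Complex.norm_I, Complex.norm_real, Real.norm_eq_abs, _root_.sq_abs]
    rw [hψ2]
    have hnum : ‖(((-x * g s : ℝ) : ℂ) * (Complex.I * (ψ s : ℂ)) - (g s : ℂ) * (Complex.I * (ψ' s : ℂ)))‖
        ≤ x * g s * |ψ s| + ψ' s := by
      refine (norm_sub_le _ _).trans ?_
      rw [norm_mul, norm_mul, norm_mul, norm_mul]
      simp only [Complex.norm_I, Complex.norm_real, Real.norm_eq_abs, one_mul]
      rw [abs_of_pos (hgpos s), abs_of_neg (by nlinarith [hgpos s] : -x * g s < 0),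
        abs_of_pos (hψ'pos s)]
      have : g s * ψ' s ≤ 1 * ψ' s :=
        mul_le_mul_of_nonneg_right (hg1 s hs.1) (hψ'pos s).le
      nlinarith [hgpos s, abs_nonneg (ψ s)]
    have hψsq : (0:ℝ) < (ψ s)^2 := pow_two_pos_of_ne_zero (hne s hs)
    have habs0 : |ψ s| ≠ 0 := fun h0 => hne s hs (abs_eq_zero.mp h0)
    have habspos : 0 < |ψ s| := abs_pos.mpr (hne s hs)
    have h1 : ‖((-x * g s : ℝ) : ℂ) * (Complex.I * (ψ s : ℂ)) - (g s : ℂ) * (Complex.I * (ψ' s : ℂ))‖ / (ψ s)^2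
        ≤ (x * g s * |ψ s| + ψ' s) / (ψ s)^2 := by gcongr
    have key : ∀ A B C : ℝ, B ≠ 0 → (A * B + C) / B^2 = A / B + C / B^2 := by
      intro A B C hB; field_simp
    have h2 : (x * g s * |ψ s| + ψ' s) / (ψ s)^2 = x * g s / |ψ s| + ψ' s / (ψ s)^2 := by
      rw [← _root_.sq_abs (ψ s)]
      exact key _ _ _ habs0
    have h3 : x * g s / |ψ s| ≤ x * g s / lam :=
      div_le_div_of_nonneg_left (by positivity) hlam (habs s hs)
    linarith
  -- integrability of the bound
  have hb2cont : ContinuousOn (fun s => ψ' s / (ψ s)^2) (Icc α β) :=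
    ContinuousOn.div hψ'c.continuousOn (by fun_prop) (fun s hs => pow_ne_zero 2 (hne s hs))
  have hbcont : ContinuousOn (fun s => x * g s / lam + ψ' s / (ψ s)^2) (Icc α β) :=
    ContinuousOn.add (by fun_prop) hb2cont
  have hmα : α ∈ Icc α β := ⟨le_rfl, hαβ⟩
  have hmβ : β ∈ Icc α β := ⟨hαβ, le_rfl⟩
  have hmid : ‖∫ s in α..β, u' s * v s‖ ≤ 3 / lam := by
    have step1 : ‖∫ s in α..β, u' s * v s‖ ≤ ∫ s in α..β, ‖u' s * v s‖ :=
      intervalIntegral.norm_integral_le_integral_norm hαβ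
    have hi1 : IntervalIntegrable (fun s => ‖u' s * v s‖) volume α β := by
      apply ContinuousOn.intervalIntegrable
      rw [huIcc]
      exact (hu'c.mul hvc.continuousOn).norm
    have hi2 : IntervalIntegrable (fun s => x * g s / lam + ψ' s / (ψ s)^2) volume α β := by
      apply ContinuousOn.intervalIntegrable
      rwa [huIcc]
    have step2 : ∫ s in α..β, ‖u' s * v s‖ ≤ ∫ s in α..β, (x * g s / lam + ψ' s / (ψ s)^2) :=
      intervalIntegral.integral_mono_on hαβ hi1 hi2 hpt
    have hi3 : IntervalIntegrable (fun s => x * g s / lam) volume α β := by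
      apply Continuous.intervalIntegrable; fun_prop
    have hi4 : IntervalIntegrable (fun s => ψ' s / (ψ s)^2) volume α β := by
      apply ContinuousOn.intervalIntegrable; rwa [huIcc]
    have hsum : ∫ s in α..β, (x * g s / lam + ψ' s / (ψ s)^2)
        = (∫ s in α..β, x * g s / lam) + ∫ s in α..β, ψ' s / (ψ s)^2 :=
      intervalIntegral.integral_add hi3 hi4
    have int1 : ∫ s in α..β, x * g s / lam = (g α - g β) / lam := by
      have hd : ∀ s ∈ Set.uIcc α β, HasDerivAt (fun s => -g s / lam) (x * g s / lam) s := by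
        intro s _
        have := ((g_hasDeriv x s).neg).div_const lam
        refine this.congr_deriv ?_
        show _ = x * Real.exp (-(s * x)) / lam; ring
      rw [intervalIntegral.integral_eq_sub_of_hasDerivAt hd hi3]
      ring
    have int2 : ∫ s in α..β, ψ' s / (ψ s)^2 = (ψ α)⁻¹ - (ψ β)⁻¹ := by
      have hd : ∀ s ∈ Set.uIcc α β, HasDerivAt (fun s => -(ψ s)⁻¹) (ψ' s / (ψ s)^2) s := by
        intro s hs
        rw [huIcc] at hs
        have := ((psi_hasDeriv t y s).inv (hne s hs)).neg
        refine this.congr_deriv ?_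
        show _ = (12*s^2+2)*t / ((4*s^3+2*s)*t - y)^2; ring
      rw [intervalIntegral.integral_eq_sub_of_hasDerivAt hd hi4]
      ring
    have e1 : (g α - g β) / lam ≤ 1 / lam := by
      have := hg1 α le_rfl
      have := hgpos β
      gcongr
      linarith
    have e2 : (ψ α)⁻¹ - (ψ β)⁻¹ ≤ 2 / lam := by
      have ha1 : |(ψ α)⁻¹| ≤ lam⁻¹ := by
        rw [abs_inv]; exact inv_anti₀ hlam (habs α hmα)
      have hb1 : |(ψ β)⁻¹| ≤ lam⁻¹ := by
        rw [abs_inv]; exact inv_anti₀ hlam (habs β hmβ)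
      have h2lam : 2 / lam = lam⁻¹ + lam⁻¹ := by ring
      rw [h2lam]
      linarith [le_abs_self (ψ α)⁻¹, neg_abs_le (ψ β)⁻¹]
    calc ‖∫ s in α..β, u' s * v s‖ ≤ ∫ s in α..β, (x * g s / lam + ψ' s / (ψ s)^2) :=
          step1.trans step2
      _ = (g α - g β) / lam + ((ψ α)⁻¹ - (ψ β)⁻¹) := by rw [hsum, int1, int2]
      _ ≤ 1 / lam + 2 / lam := add_le_add e1 e2
      _ = 3 / lam := by ring
  calc ‖u β * v β - u α * v α - ∫ s in α..β, u' s * v s‖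
      ≤ ‖u β * v β - u α * v α‖ + ‖∫ s in α..β, u' s * v s‖ := norm_sub_le _ _
    _ ≤ (‖u β‖ * ‖v β‖ + ‖u α‖ * ‖v α‖) + 3 / lam := by
        refine add_le_add ((norm_sub_le _ _).trans ?_) hmid
        rw [norm_mul, norm_mul]
    _ ≤ (1 / lam * 1 + 1 / lam * 1) + 3 / lam := by
        have := hnu α hmα
        have := hnu β hmβ
        have := hnv α
        have := hnv β
        gcongr <;> simp_all
    _ = 5 / lam := by ring


lemma K_cont (x t y : ℝ) : Continuous (K x t y) := by
  unfold K; fun_prop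

lemma K_integrableOn (x t y : ℝ) (hx : 0 < x) (c : ℝ) :
    IntegrableOn (K x t y) (Ioi c) := by
  apply Integrable.mono' (exp_neg_integrableOn_Ioi c hx)
    ((K_cont x t y).aestronglyMeasurable.restrict)
  filter_upwards with s
  rw [norm_K]
  simp [mul_comm]

lemma tail_bound (x t y : ℝ) (hx : 0 < x) (ht : 0 < t) {lam c : ℝ} (hlam : 0 < lam)
    (hc : 0 ≤ c)
    (hsgn : (∀ s, c ≤ s → lam ≤ (4*s^3+2*s)*t - y) ∨
            (∀ s, c ≤ s → (4*s^3+2*s)*t - y ≤ -lam)) :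
    ‖∫ s in Ioi c, K x t y s‖ ≤ 5 / lam := by
  have hInt : IntegrableOn (K x t y) (Ioi c) := K_integrableOn x t y hx c
  have htend := intervalIntegral_tendsto_integral_Ioi c hInt Filter.tendsto_id
  refine le_of_tendsto htend.norm ?_
  filter_upwards [Filter.eventually_ge_atTop c] with β hβ
  apply ibp_bound x t y hx ht hlam hc hβ
  rcases hsgn with h | h
  · exact Or.inl fun s hs => h s hs.1
  · exact Or.inr fun s hs => h s hs.1

lemma triv_bound (x t y : ℝ) (hx : 0 < x) {a b : ℝ} (ha : 0 ≤ a) (hab : a ≤ b) :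
    ‖∫ s in a..b, K x t y s‖ ≤ b - a := by
  have h := intervalIntegral.norm_integral_le_of_norm_le_const (C := 1)
    (f := K x t y) (a := a) (b := b) ?_
  · rw [_root_.abs_of_nonneg (by linarith)] at h
    linarith
  · intro s hs
    rw [Set.uIoc_of_le hab] at hs
    rw [norm_K]
    exact Real.exp_le_one_iff.mpr (by nlinarith [hs.1])

lemma psi_mono (t y : ℝ) (ht : 0 < t) {a b : ℝ} (hab : a ≤ b) :
    (4*a^3+2*a)*t - y ≤ (4*b^3+2*b)*t - y := by
  have key : 0 ≤ (b - a) * (2*(a+b)^2 + 2*a^2 + 2*b^2 + 2) :=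
    mul_nonneg (by linarith) (by positivity)
  nlinarith [mul_nonneg ht.le key]

lemma psi_neg (t y q c s : ℝ) (ht : 0 < t) (hq : 0 < q) (hq4 : q^4 = t)
    (hcq : (4*c^3+2*c)*t - y = q) (hs2 : 2/q ≤ s) (hcs : s ≤ c)
    (hdist : 1/(24*q) ≤ c - s) :
    (4*s^3+2*s)*t - y ≤ -q := by
  have hsq : 2 ≤ s * q := by rw [div_le_iff₀ hq] at hs2; linarith
  have hspos : 0 < s := by nlinarith
  have hcpos : 0 < c := lt_of_lt_of_le hspos hcs
  have hq2pos : (0:ℝ) < q^2 := by positivity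
  have hs2' : 4/q^2 ≤ s^2 := by
    rw [div_le_iff₀ hq2pos]; nlinarith
  have hc2 : s^2 ≤ c^2 := by nlinarith
  have hcss : s^2 ≤ c*s := by nlinarith
  have h3 : 12/q^2 ≤ c^2 + c*s + s^2 := by
    have h12 : 12/q^2 = 3*(4/q^2) := by ring
    linarith
  have hq2 : 48*q^2 = t * (48/q^2) := by
    field_simp
    linear_combination hq4
  have key : 48*q^2*(c-s) ≤ ((4*c^3+2*c)*t - y) - ((4*s^3+2*s)*t - y) := by
    have h1 : ((4*c^3+2*c)*t - y) - ((4*s^3+2*s)*t - y)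
        = t*((c-s)*(4*(c^2+c*s+s^2)+2)) := by ring
    have h2 : 48*q^2*(c-s) = t*((c-s)*(48/q^2)) := by rw [hq2]; ring
    rw [h1, h2]
    have h4 : 48/q^2 = 4*(12/q^2) := by ring
    gcongr
    · linarith
  have h48 : 48*q^2*(1/(24*q)) = 2*q := by field_simp; ring
  have h5 : 48*q^2*(1/(24*q)) ≤ 48*q^2*(c-s) := by
    apply mul_le_mul_of_nonneg_left hdist (by positivity)
  linarith

theorem stmt_5 :
    ∃ C : ℝ, 0 < C ∧ ∀ x t y : ℝ, 0 < x → 0 < t →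
      ‖∫ s in Ioi (0:ℝ),
          Complex.exp (-(s * x : ℝ) + Complex.I * (((s^4 + s^2) * t : ℝ) - s * y))‖
        ≤ C * t ^ (-(1/4 : ℝ)) := by
  refine ⟨13, by norm_num, fun x t y hx ht => ?_⟩
  show ‖∫ s in Ioi (0:ℝ), K x t y s‖ ≤ 13 * t ^ (-(1/4 : ℝ))
  set q : ℝ := t ^ ((1:ℝ)/4) with hqdef
  have hq : 0 < q := Real.rpow_pos_of_pos ht _
  have hq4 : q ^ 4 = t := by
    rw [hqdef, ← Real.rpow_natCast (t ^ ((1:ℝ)/4)) 4, ← Real.rpow_mul ht.le]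
    norm_num
  have htneg : t ^ (-(1/4 : ℝ)) = q⁻¹ := by
    rw [hqdef, ← Real.rpow_neg_one (t ^ ((1:ℝ)/4)), ← Real.rpow_mul ht.le]
    norm_num
  rw [htneg]
  set B : ℝ := 2 / q with hBdef
  have hB : 0 < B := by positivity
  set ψ : ℝ → ℝ := fun s => (4*s^3+2*s)*t - y with hψ
  -- splitting the integral at B
  have hIntIoi : ∀ c : ℝ, IntegrableOn (K x t y) (Ioi c) := K_integrableOn x t y hx
  have hsplit : ∀ a b : ℝ, 0 ≤ a → a ≤ b →
      ∫ s in Ioi a, K x t y s = (∫ s in a..b, K x t y s) + ∫ s in Ioi b, K x t y s := by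
    intro a b ha hab
    rw [intervalIntegral.integral_of_le hab,
      ← setIntegral_union (Ioc_disjoint_Ioi le_rfl) measurableSet_Ioi
        ((hIntIoi a).mono_set Ioc_subset_Ioi_self) (hIntIoi b),
      Ioc_union_Ioi_eq_Ioi hab]
  by_cases hcase : q ≤ ψ B
  · -- no stationary point: ψ ≥ q on [B, ∞)
    have htail : ‖∫ s in Ioi B, K x t y s‖ ≤ 5 / q := by
      apply tail_bound x t y hx ht hq hB.le
      exact Or.inl fun s hs => le_trans hcase (psi_mono t y ht hs)
    rw [hsplit 0 B le_rfl hB.le]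
    calc ‖(∫ s in (0:ℝ)..B, K x t y s) + ∫ s in Ioi B, K x t y s‖
        ≤ ‖∫ s in (0:ℝ)..B, K x t y s‖ + ‖∫ s in Ioi B, K x t y s‖ := norm_add_le _ _
      _ ≤ (B - 0) + 5 / q := add_le_add (triv_bound x t y hx le_rfl hB.le) htail
      _ ≤ 13 * q⁻¹ := by
          rw [hBdef, div_eq_mul_inv, div_eq_mul_inv]
          linarith [inv_pos.mpr hq]
  · push_neg at hcase
    -- find c ≥ B with ψ c = q
    set s₀ : ℝ := max B ((q + y) / (2*t)) with hs₀def
    have hs₀B : B ≤ s₀ := le_max_left _ _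
    have hs₀pos : 0 < s₀ := lt_of_lt_of_le hB hs₀B
    have hψs₀ : q ≤ ψ s₀ := by
      have h1 : (q + y) / (2*t) ≤ s₀ := le_max_right _ _
      have h2 : q + y ≤ 2 * t * s₀ := by
        rw [div_le_iff₀ (by positivity)] at h1
        linarith
      have h3 : (0:ℝ) < s₀^3 := pow_pos hs₀pos 3
      show q ≤ (4*s₀^3+2*s₀)*t - y
      nlinarith [mul_pos h3 ht]
    obtain ⟨c, hcmem, hcq⟩ : ∃ c ∈ Icc B s₀, ψ c = q := by
      have hcont : ContinuousOn ψ (Icc B s₀) := by rw [hψ]; fun_prop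
      have := intermediate_value_Icc hs₀B hcont
      exact this ⟨hcase.le, hψs₀⟩
    have hBc : B ≤ c := hcmem.1
    have hcpos : 0 < c := lt_of_lt_of_le hB hBc
    set δ : ℝ := 1 / (24 * q) with hδdef
    have hδpos : 0 < δ := by positivity
    set c' : ℝ := max B (c - δ) with hc'def
    have hBc' : B ≤ c' := le_max_left _ _
    have hc'c : c' ≤ c := max_le hBc (by linarith)
    have hcc' : c - c' ≤ δ := by
      have : c - δ ≤ c' := le_max_right _ _
      linarith
    -- tail on Ioi c
    have htail : ‖∫ s in Ioi c, K x t y s‖ ≤ 5 / q := by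
      apply tail_bound x t y hx ht hq hcpos.le
      refine Or.inl fun s hs => ?_
      calc q = ψ c := hcq.symm
        _ ≤ ψ s := psi_mono t y ht hs
    -- bound on [B, c']
    have hleft : ‖∫ s in B..c', K x t y s‖ ≤ 5 / q := by
      rcases le_or_gt (c - δ) B with hd | hd
      · have : c' = B := max_eq_left (by linarith)
        rw [this, intervalIntegral.integral_same]
        simp
        positivity
      · have hc'eq : c' = c - δ := max_eq_right (by linarith)
        apply ibp_bound x t y hx ht hq hB.le hBc'
        refine Or.inr fun s hs => ?_
        have hsB : B ≤ s := hs.1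
        have hsc' : s ≤ s ⊔ c' := le_max_left _ _
        have hsc : 1/(24*q) ≤ c - s := by
          have h1 : s ≤ c' := hs.2
          rw [hc'eq] at h1
          rw [hδdef] at h1
          linarith
        have hs2 : 2/q ≤ s := by rw [hBdef] at hsB; exact hsB
        have hscc : s ≤ c := by
          have h1 : s ≤ c' := hs.2
          exact le_trans h1 hc'c
        exact psi_neg t y q c s ht hq hq4 hcq hs2 hscc hsc
    -- assemble
    have hKint : ∀ a b : ℝ, IntervalIntegrable (K x t y) volume a b :=
      fun a b => (K_cont x t y).intervalIntegrable a b
    have hmidsplit : ∫ s in B..c, K x t y s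
        = (∫ s in B..c', K x t y s) + ∫ s in c'..c, K x t y s :=
      (intervalIntegral.integral_add_adjacent_intervals (hKint B c') (hKint c' c)).symm
    rw [hsplit 0 B le_rfl hB.le, hsplit B c hB.le hBc, hmidsplit]
    have e0 : ‖∫ s in (0:ℝ)..B, K x t y s‖ ≤ B := by
      have := triv_bound x t y hx (le_refl (0:ℝ)) hB.le
      linarith
    have emid : ‖∫ s in c'..c, K x t y s‖ ≤ δ := by
      have h0c' : 0 ≤ c' := le_trans hB.le hBc'
      have := triv_bound x t y hx h0c' hc'c
      linarith
    calc ‖(∫ s in (0:ℝ)..B, K x t y s) +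
            (((∫ s in B..c', K x t y s) + ∫ s in c'..c, K x t y s) + ∫ s in Ioi c, K x t y s)‖
        ≤ ‖∫ s in (0:ℝ)..B, K x t y s‖ +
            (‖∫ s in B..c', K x t y s‖ + ‖∫ s in c'..c, K x t y s‖ + ‖∫ s in Ioi c, K x t y s‖) := by
          refine (norm_add_le _ _).trans ?_
          gcongr
          refine (norm_add_le _ _).trans ?_
          gcongr
          exact norm_add_le _ _
      _ ≤ B + (5 / q + δ + 5 / q) :=
          add_le_add e0 (add_le_add (add_le_add hleft emid) htail)
      _ ≤ 13 * q⁻¹ := by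
          rw [hBdef, hδdef, div_eq_mul_inv, div_eq_mul_inv, div_eq_mul_inv, mul_inv]
          have hqi : (0:ℝ) < q⁻¹ := inv_pos.mpr hq
          have h24 : (0:ℝ) < (24:ℝ)⁻¹ := by norm_num
          nlinarith
end

section
/- The kernel $K_3(y;x,t) = \int_{1/\sqrt{2}}^\infty e^{is(x-y) - i(4s^4 - 2s^2 + 1/4)t - (s^2 - 1/2)^{1/2} x}\, ds$ satisfies $|K_3(y;x,t)| \le C t^{-1/4}$ for all $t > 0$, $x > 0$, $y \in \mathbb{R}$. -/
open MeasureTheory Set Complex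

noncomputable def r3 (s : ℝ) : ℝ := Real.sqrt (s^2 - 1/2)

noncomputable def F3 (t x c s : ℝ) : ℂ :=
  Complex.exp (Complex.I * ((s * c : ℝ) - ((4*s^4 - 2*s^2 + 1/4) * t : ℝ))
    - (r3 s * x : ℝ))

noncomputable def g3 (t c s : ℝ) : ℝ := c - (16*s^3 - 4*s)*t

lemma continuous_r3 : Continuous r3 := by
  unfold r3; fun_prop

lemma continuous_F3 (t x c : ℝ) : Continuous (F3 t x c) := by
  have := continuous_r3
  unfold F3
  fun_prop

lemma continuous_g3 (t c : ℝ) : Continuous (g3 t c) := by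
  unfold g3; fun_prop

lemma norm_F3 (t x c s : ℝ) : ‖F3 t x c s‖ = Real.exp (-(r3 s * x)) := by
  rw [F3, Complex.norm_exp]
  simp [Complex.sub_re, Complex.mul_re, ← Complex.ofReal_pow]

lemma norm_F3_le_one (t x c s : ℝ) (hx : 0 ≤ x) : ‖F3 t x c s‖ ≤ 1 := by
  rw [norm_F3, Real.exp_le_one_iff]
  have := Real.sqrt_nonneg (s^2 - 1/2)
  rw [r3]
  nlinarith

lemma hasDerivAt_r3 {s : ℝ} (hs : 0 < s^2 - 1/2) : HasDerivAt r3 (s / r3 s) s := by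
  have h1 : HasDerivAt (fun s : ℝ => s^2 - 1/2) (2*s) s := by
    simpa using ((hasDerivAt_pow 2 s).sub_const (1/2))
  have := (Real.hasDerivAt_sqrt (ne_of_gt hs)).comp s h1
  refine this.congr_deriv ?_
  rw [r3]
  field_simp

lemma hasDerivAt_g3 (t c : ℝ) (s : ℝ) : HasDerivAt (g3 t c) (-((48*s^2 - 4)*t)) s := by
  have h1 : HasDerivAt (fun s : ℝ => 16*s^3 - 4*s) (48*s^2 - 4) s := by
    have := ((hasDerivAt_pow 3 s).const_mul 16).sub ((hasDerivAt_id s).const_mul 4)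
    refine this.congr_deriv ?_
    ring
  have := (hasDerivAt_const s c).sub (h1.mul_const t)
  refine this.congr_deriv ?_
  ring

lemma hasDerivAt_F3 (t x c : ℝ) {s : ℝ} (hs : 0 < s^2 - 1/2) :
    HasDerivAt (F3 t x c)
      (F3 t x c s * (Complex.I * (g3 t c s : ℝ) - ((s / r3 s * x : ℝ) : ℂ))) s := by
  have h1 : HasDerivAt (fun s : ℝ => s * c) c s := by
    simpa using (hasDerivAt_id s).mul_const c
  have h2 : HasDerivAt (fun s : ℝ => (4*s^4 - 2*s^2 + 1/4) * t) ((16*s^3 - 4*s)*t) s := by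
    have hp : HasDerivAt (fun s : ℝ => 4*s^4 - 2*s^2 + 1/4) (16*s^3 - 4*s) s := by
      have := (((hasDerivAt_pow 4 s).const_mul 4).sub ((hasDerivAt_pow 2 s).const_mul 2)).add_const (1/4)
      refine this.congr_deriv ?_
      ring
    exact hp.mul_const t
  have h4 : HasDerivAt (fun s : ℝ => r3 s * x) (s / r3 s * x) s := (hasDerivAt_r3 hs).mul_const x
  have hE : HasDerivAt (fun s : ℝ => Complex.I * ((s * c : ℝ) - ((4*s^4 - 2*s^2 + 1/4) * t : ℝ))
      - ((r3 s * x : ℝ) : ℂ))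
      (Complex.I * (g3 t c s : ℝ) - ((s / r3 s * x : ℝ) : ℂ)) s := by
    have := (((h1.ofReal_comp).sub (h2.ofReal_comp)).const_mul Complex.I).sub h4.ofReal_comp
    refine this.congr_deriv ?_
    rw [g3]
    push_cast
    ring
  exact hE.cexp

set_option maxHeartbeats 2000000 in
lemma osc1 (t x c μ u v : ℝ) (ht : 0 < t) (hx : 0 < x) (hμ : 0 < μ)
    (huv : u ≤ v) (hu2 : 1/2 < u^2) (hu0 : 0 < u)
    (hg : (∀ s ∈ Icc u v, μ ≤ g3 t c s) ∨ (∀ s ∈ Icc u v, g3 t c s ≤ -μ)) :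
    ‖∫ s in u..v, F3 t x c s‖ ≤ 4/μ := by
  -- basic facts on Icc
  have hs2 : ∀ s ∈ Icc u v, 0 < s^2 - 1/2 := by
    intro s hs
    have h1 : u ≤ s := hs.1
    nlinarith
  have hr3pos : ∀ s ∈ Icc u v, 0 < r3 s := by
    intro s hs
    exact Real.sqrt_pos.mpr (hs2 s hs)
  have habs : ∀ s ∈ Icc u v, μ ≤ |g3 t c s| := by
    rcases hg with h | h
    · intro s hs; exact (h s hs).trans (le_abs_self _)
    · intro s hs
      have := h s hs
      rw [abs_of_nonpos (by linarith)]
      linarith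
  have hgne : ∀ s ∈ Icc u v, g3 t c s ≠ 0 := by
    intro s hs
    have := habs s hs
    intro h0
    rw [h0] at this
    simp at this
    linarith
  have hIGne : ∀ s ∈ Icc u v, Complex.I * (g3 t c s : ℝ) ≠ 0 := by
    intro s hs
    simp [Complex.I_ne_zero, Complex.ext_iff]
    exact hgne s hs
  -- the parts
  set F := F3 t x c with hF
  set G := g3 t c with hGdef
  set H : ℝ → ℂ := fun s => F s / (Complex.I * (G s : ℝ)) with hH
  set Φ : ℝ → ℂ := fun s =>
      F s * ((s / r3 s * x : ℝ) : ℂ) / (Complex.I * (G s : ℝ))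
      + F s * ((-((48*s^2 - 4)*t) : ℝ) : ℂ) / (Complex.I * ((G s : ℝ))^2) with hΦ
  have hHderiv : ∀ s ∈ Icc u v, HasDerivAt H (F s - Φ s) s := by
    intro s hs
    have hd := (hasDerivAt_F3 t x c (hs2 s hs)).div
      (((hasDerivAt_g3 t c s).ofReal_comp.const_mul Complex.I)) (hIGne s hs)
    refine hd.congr_deriv ?_
    rw [← hF, ← hGdef]
    have h1 : (Complex.I * (G s : ℝ)) ≠ 0 := hIGne s hs
    have h2 : ((G s : ℝ) : ℂ) ≠ 0 := by
      simpa using Complex.ofReal_ne_zero.mpr (hgne s hs)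
    have h3 : ((r3 s : ℝ) : ℂ) ≠ 0 := Complex.ofReal_ne_zero.mpr (hr3pos s hs).ne'
    rw [hΦ]
    push_cast
    field_simp
    ring
  -- continuity
  have hcontR : ContinuousOn (fun s => ((s / r3 s * x : ℝ) : ℂ)) (Icc u v) := by
    apply Complex.continuous_ofReal.comp_continuousOn
    exact (continuousOn_id.div continuous_r3.continuousOn
      (fun s hs => (hr3pos s hs).ne')).mul continuousOn_const
  have hcontIG : ContinuousOn (fun s => Complex.I * (G s : ℝ)) (Icc u v) :=
    continuousOn_const.mul (Complex.continuous_ofReal.comp_continuousOn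
      (continuous_g3 t c).continuousOn)
  have hcontΦ : ContinuousOn Φ (Icc u v) := by
    apply ContinuousOn.add
    · exact (((continuous_F3 t x c).continuousOn.mul hcontR).div hcontIG hIGne)
    · apply ContinuousOn.div
      · exact (continuous_F3 t x c).continuousOn.mul
          (Complex.continuous_ofReal.comp_continuousOn (by fun_prop))
      · exact continuousOn_const.mul ((Complex.continuous_ofReal.comp_continuousOn
          (continuous_g3 t c).continuousOn).pow 2)
      · intro s hs
        simp only [mul_ne_zero_iff]
        refine ⟨Complex.I_ne_zero, pow_ne_zero _ ?_⟩
        simpa using Complex.ofReal_ne_zero.mpr (hgne s hs)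
  have huIcc : uIcc u v = Icc u v := uIcc_of_le huv
  have hintΦ : IntervalIntegrable Φ volume u v := by
    apply ContinuousOn.intervalIntegrable
    rwa [huIcc]
  have hintF : IntervalIntegrable F volume u v := (continuous_F3 t x c).intervalIntegrable u v
  have key : ∫ s in u..v, (F s - Φ s) = H v - H u := by
    apply intervalIntegral.integral_eq_sub_of_hasDerivAt
    · intro s hs
      exact hHderiv s (huIcc ▸ hs)
    · exact hintF.sub hintΦ
  have hsplit : ∫ s in u..v, F s = (H v - H u) + ∫ s in u..v, Φ s := by
    rw [← key, ← intervalIntegral.integral_add (hintF.sub hintΦ) hintΦ]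
    simp
  -- bound of terms
  have hHle : ∀ w ∈ Icc u v, ‖H w‖ ≤ 1/μ := by
    intro w hw
    rw [hH]
    simp only [norm_div]
    have h1 : ‖Complex.I * ((G w : ℝ) : ℂ)‖ = |G w| := by
      simp
    rw [h1]
    exact div_le_div₀ (by norm_num) (norm_F3_le_one t x c w hx.le) hμ (habs w hw)
  -- the real dominating function
  set h : ℝ → ℝ := fun s =>
    Real.exp (-(r3 s * x)) * (s / r3 s * x) / μ + ((48*s^2 - 4)*t)/(G s)^2 with hh
  have hΦle : ∀ s ∈ Icc u v, ‖Φ s‖ ≤ h s := by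
    intro s hs
    have hFn : ‖F s‖ = Real.exp (-(r3 s * x)) := norm_F3 t x c s
    have h48 : (0:ℝ) ≤ (48*s^2 - 4)*t := by nlinarith [hs2 s hs]
    have e1 : ‖Complex.I * ((G s : ℝ) : ℂ)‖ = |G s| := by
      rw [norm_mul, Complex.norm_I, one_mul, Complex.norm_real, Real.norm_eq_abs]
    have e2 : ‖Complex.I * ((G s : ℝ) : ℂ)^2‖ = (G s)^2 := by
      rw [norm_mul, Complex.norm_I, one_mul, norm_pow, Complex.norm_real, Real.norm_eq_abs,
        _root_.sq_abs]
    have hRnn : 0 ≤ s / r3 s * x := by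
      have h1 := (hr3pos s hs).le
      have h2 : (0:ℝ) < s := lt_of_lt_of_le hu0 hs.1
      positivity
    have e3 : ‖(((s / r3 s * x : ℝ)) : ℂ)‖ = s / r3 s * x := by
      rw [Complex.norm_real, Real.norm_eq_abs, _root_.abs_of_nonneg hRnn]
    have e4 : ‖((-((48*s^2 - 4)*t) : ℝ) : ℂ)‖ = (48*s^2 - 4)*t := by
      rw [Complex.norm_real, Real.norm_eq_abs, abs_neg, _root_.abs_of_nonneg h48]
    have hp1 : Real.exp (-(r3 s * x)) ≤ 1 := by
      rw [Real.exp_le_one_iff]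
      have := (hr3pos s hs).le
      nlinarith
    have hpnn : (0:ℝ) ≤ Real.exp (-(r3 s * x)) := (Real.exp_pos _).le
    have hG2 : (0:ℝ) < (G s)^2 := by
      have := hgne s hs
      positivity
    have b1 : ‖F s * ((s / r3 s * x : ℝ) : ℂ) / (Complex.I * (G s : ℝ))‖
        ≤ Real.exp (-(r3 s * x)) * (s / r3 s * x) / μ := by
      rw [norm_div, norm_mul, e3, e1, hFn]
      exact div_le_div₀ (by positivity) le_rfl hμ (habs s hs)
    have b2 : ‖F s * ((-((48*s^2 - 4)*t) : ℝ) : ℂ) / (Complex.I * ((G s : ℝ))^2)‖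
        ≤ ((48*s^2 - 4)*t)/(G s)^2 := by
      rw [norm_div, norm_mul, e4, e2, hFn]
      apply div_le_div₀ h48 _ hG2 le_rfl
      nlinarith
    calc ‖Φ s‖ ≤ ‖F s * ((s / r3 s * x : ℝ) : ℂ) / (Complex.I * (G s : ℝ))‖
        + ‖F s * ((-((48*s^2 - 4)*t) : ℝ) : ℂ) / (Complex.I * ((G s : ℝ))^2)‖ := norm_add_le _ _
      _ ≤ h s := by rw [hh]; exact add_le_add b1 b2
  -- antiderivative of the dominating function
  set ψ : ℝ → ℝ := fun s => -(Real.exp (-(r3 s * x)))/μ + 1/(G s) with hψ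
  have hψderiv : ∀ s ∈ Icc u v, HasDerivAt ψ (h s) s := by
    intro s hs
    have hp : HasDerivAt (fun s => Real.exp (-(r3 s * x)))
        (Real.exp (-(r3 s * x)) * (-(s / r3 s * x))) s := by
      have := (((hasDerivAt_r3 (hs2 s hs)).mul_const x).neg).exp
      simpa using this
    have hq : HasDerivAt (fun s => 1/(G s)) (((48*s^2 - 4)*t)/(G s)^2) s := by
      have := (hasDerivAt_g3 t c s).inv (hgne s hs)
      simp only [one_div]
      refine this.congr_deriv ?_
      rw [neg_neg]
    have := ((hp.neg).div_const μ).add hq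
    refine this.congr_deriv ?_
    rw [hh]
    field_simp
    try ring
  have hconth : ContinuousOn h (Icc u v) := by
    rw [hh]
    apply ContinuousOn.add
    · apply ContinuousOn.div_const
      apply ContinuousOn.mul
      · exact (Real.continuous_exp.comp (continuous_r3.mul continuous_const).neg).continuousOn
      · exact (continuousOn_id.div continuous_r3.continuousOn
          (fun s hs => (hr3pos s hs).ne')).mul continuousOn_const
    · exact ContinuousOn.div (by fun_prop) ((continuous_g3 t c).continuousOn.pow 2)
        (fun s hs => by have := hgne s hs; positivity)
  have hinth : IntervalIntegrable h volume u v := by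
    apply ContinuousOn.intervalIntegrable
    rwa [huIcc]
  have hFTCh : ∫ s in u..v, h s = ψ v - ψ u := by
    apply intervalIntegral.integral_eq_sub_of_hasDerivAt
    · intro s hs
      exact hψderiv s (huIcc ▸ hs)
    · exact hinth
  have hIoc : uIoc u v ⊆ Icc u v := by
    rw [uIoc_of_le huv]
    exact Ioc_subset_Icc_self
  have hΦnorm : ‖∫ s in u..v, Φ s‖ ≤ 2/μ := by
    have h1 : ‖∫ s in u..v, Φ s‖ ≤ |∫ s in u..v, h s| := by
      apply intervalIntegral.norm_integral_le_abs_of_norm_le _ hinth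
      filter_upwards [MeasureTheory.ae_restrict_mem measurableSet_uIoc] with s hs
      exact hΦle s (hIoc hs)
    have hnn : 0 ≤ ∫ s in u..v, h s := by
      apply intervalIntegral.integral_nonneg huv
      intro s hs
      have hs' : s ∈ Icc u v := hs
      have h48 : (0:ℝ) ≤ (48*s^2 - 4)*t := by nlinarith [hs2 s hs']
      have hr := (hr3pos s hs').le
      have hsp : (0:ℝ) < s := lt_of_lt_of_le hu0 hs'.1
      have hG2 : (0:ℝ) < (G s)^2 := by have := hgne s hs'; positivity
      rw [hh]
      positivity
    rw [_root_.abs_of_nonneg hnn, hFTCh] at h1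
    refine h1.trans ?_
    have hpu : Real.exp (-(r3 u * x)) ≤ 1 := by
      rw [Real.exp_le_one_iff]
      have := Real.sqrt_nonneg (u^2 - 1/2)
      rw [r3]; nlinarith
    have hpv : (0:ℝ) ≤ Real.exp (-(r3 v * x)) := (Real.exp_pos _).le
    have humem : u ∈ Icc u v := ⟨le_rfl, huv⟩
    have hvmem : v ∈ Icc u v := ⟨huv, le_rfl⟩
    have hsecond : 1/(G v) - 1/(G u) ≤ 1/μ := by
      rcases hg with hpos | hneg
      · have h1 : μ ≤ G v := hpos v hvmem
        have h2 : μ ≤ G u := hpos u humem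
        have h3 : 1/(G v) ≤ 1/μ := one_div_le_one_div_of_le hμ h1
        have h4 : 0 < 1/(G u) := one_div_pos.mpr (lt_of_lt_of_le hμ h2)
        linarith
      · have h1 : G v ≤ -μ := hneg v hvmem
        have h2 : G u ≤ -μ := hneg u humem
        have h3 : 1/(G v) ≤ 0 := by
          apply div_nonpos_of_nonneg_of_nonpos <;> linarith
        have h4 : 1/(-(G u)) ≤ 1/μ := one_div_le_one_div_of_le hμ (by linarith)
        have h5 : -(1/μ) ≤ 1/(G u) := by
          rw [one_div_neg_eq_neg_one_div] at h4
          linarith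
        linarith
    have hfirst : (Real.exp (-(r3 u * x)) - Real.exp (-(r3 v * x)))/μ ≤ 1/μ := by
      gcongr
      linarith
    simp only [hψ]
    calc -Real.exp (-(r3 v * x)) / μ + 1 / G v - (-Real.exp (-(r3 u * x)) / μ + 1 / G u)
        = (Real.exp (-(r3 u * x)) - Real.exp (-(r3 v * x)))/μ + (1/(G v) - 1/(G u)) := by ring
      _ ≤ 1/μ + 1/μ := add_le_add hfirst hsecond
      _ = 2/μ := by ring
  -- assemble
  calc ‖∫ s in u..v, F s‖ = ‖(H v - H u) + ∫ s in u..v, Φ s‖ := by rw [hsplit]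
    _ ≤ ‖H v - H u‖ + ‖∫ s in u..v, Φ s‖ := norm_add_le _ _
    _ ≤ (‖H v‖ + ‖H u‖) + 2/μ :=
        add_le_add (norm_sub_le _ _) hΦnorm
    _ ≤ (1/μ + 1/μ) + 2/μ := by
        have h1 := hHle v ⟨huv, le_rfl⟩
        have h2 := hHle u ⟨le_rfl, huv⟩
        linarith
    _ = 4/μ := by ring

lemma g3_lt (t c : ℝ) (ht : 0 < t) {s1 s2 : ℝ} (h1 : 1/2 ≤ s1) (h12 : s1 < s2) :
    g3 t c s2 < g3 t c s1 := by
  unfold g3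
  have h2 : (1:ℝ)/2 ≤ s2 := le_trans h1 h12.le
  have hb : 1/4 ≤ s1^2 := by nlinarith
  have hab : 1/4 ≤ s1*s2 := by nlinarith
  have hc : 1/4 ≤ s2^2 := by nlinarith
  have key : 0 < (s2 - s1) * (16*(s2^2 + s1*s2 + s1^2) - 4) :=
    mul_pos (by linarith) (by linarith)
  nlinarith [mul_pos key ht]

set_option maxHeartbeats 1000000 in
lemma osc_finite (t x c b : ℝ) (ht : 0 < t) (hx : 0 < x) (hb : 1/Real.sqrt 2 ≤ b) :
    ‖∫ s in (1/Real.sqrt 2)..b, F3 t x c s‖ ≤ 3 * t^(-(1/4:ℝ)) := by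
  have hsqrt2 : (0:ℝ) < Real.sqrt 2 := Real.sqrt_pos.mpr (by norm_num)
  set a : ℝ := 1/Real.sqrt 2 with ha
  have ha0 : 0 < a := by positivity
  have ha2 : a^2 = 1/2 := by
    rw [ha, div_pow, one_pow, Real.sq_sqrt (by norm_num : (2:ℝ) ≥ 0)]
  have ha12 : 1/2 ≤ a := by nlinarith [mul_pos ha0 ha0]
  clear_value a
  set T4 : ℝ := t^((1/4:ℝ)) with hT4def
  have hT4 : 0 < T4 := Real.rpow_pos_of_pos ht _
  have hTinv : t^(-(1/4:ℝ)) = T4⁻¹ := by rw [Real.rpow_neg ht.le]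
  have hT4sq : T4^2 = Real.sqrt t := by
    rw [hT4def, ← Real.rpow_natCast (t ^ (1/4:ℝ)) 2, ← Real.rpow_mul ht.le,
      Real.sqrt_eq_rpow]
    norm_num
  clear_value T4
  set S : ℝ := a + T4⁻¹ with hSdef
  have haS : a < S := by
    have h1 : 0 < T4⁻¹ := by positivity
    rw [hSdef]
    linarith
  have hS0 : 0 < S := by linarith
  have hS2 : 1/2 + (T4⁻¹)^2 ≤ S^2 := by
    have h1 : 0 < T4⁻¹ := by positivity
    nlinarith [mul_pos ha0 h1]
  clear_value S
  set lam : ℝ := (48*S^2 - 4)*t with hlamdef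
  have hlam0 : 0 < lam := by
    rw [hlamdef]
    nlinarith [mul_pos ht (pow_pos (inv_pos.mpr hT4) 2), ht]
  have hlam48 : 36 * Real.sqrt t ≤ lam := by
    have h2 : (T4⁻¹)^2 * t = Real.sqrt t := by
      have h4 : Real.sqrt t * Real.sqrt t = t := Real.mul_self_sqrt ht.le
      field_simp
      nlinarith [hT4sq, h4]
    rw [hlamdef]
    nlinarith [Real.sqrt_nonneg t, mul_le_mul_of_nonneg_right hS2 ht.le, ht, h2]
  clear_value lam
  set μ : ℝ := Real.sqrt lam with hμdef
  have hμ : 0 < μ := Real.sqrt_pos.mpr hlam0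
  have hμ2 : μ^2 = lam := Real.sq_sqrt hlam0.le
  clear_value μ
  have hμ6 : 6*T4 ≤ μ := by
    rw [hμdef, (Real.le_sqrt (by positivity) hlam0.le)]
    nlinarith [hT4sq, hlam48]
  have hinvμ : 1/μ ≤ T4⁻¹/6 := by
    have h1 : 1/μ ≤ 1/(6*T4) := one_div_le_one_div_of_le (by positivity) hμ6
    have h2 : 1/(6*T4) = T4⁻¹/6 := by
      rw [one_div, mul_inv]
      ring
    linarith
  have hS12 : 1/2 < S^2 := by nlinarith [sq_nonneg T4⁻¹, pow_pos (inv_pos.mpr hT4) 2]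
  -- trivial bound on any subinterval
  have htriv : ∀ p q : ℝ, p ≤ q → ‖∫ s in p..q, F3 t x c s‖ ≤ q - p := by
    intro p q hpq
    have := intervalIntegral.norm_integral_le_of_norm_le_const
      (C := 1) (f := F3 t x c) (a := p) (b := q)
      (fun s _ => norm_F3_le_one t x c s hx.le)
    rwa [one_mul, _root_.abs_of_nonneg (by linarith)] at this
  rcases le_or_gt b S with hbS | hSb
  · -- short interval
    have h1 := htriv a b hb
    have h2 : b - a ≤ T4⁻¹ := by
      rw [hSdef] at hbS; linarith
    rw [hTinv]
    have h3 : 0 < T4⁻¹ := by positivity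
    linarith
  · -- long interval: split
    set A : Set ℝ := insert b {w ∈ Icc S b | g3 t c w < μ} with hA
    have hAne : A.Nonempty := ⟨b, mem_insert _ _⟩
    have hAsub : A ⊆ Icc S b := by
      intro w hw
      rcases Set.mem_insert_iff.mp hw with rfl | hw
      · exact ⟨hSb.le, le_rfl⟩
      · exact hw.1
    have hAbdd : BddBelow A := ⟨S, fun w hw => (hAsub hw).1⟩
    set u : ℝ := sInf A with hu
    have hSu : S ≤ u := le_csInf hAne (fun w hw => (hAsub hw).1)
    have hub : u ≤ b := csInf_le hAbdd (mem_insert _ _)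
    set B : Set ℝ := insert b {w ∈ Icc u b | g3 t c w < -μ} with hB
    have hBne : B.Nonempty := ⟨b, mem_insert _ _⟩
    have hBsub : B ⊆ Icc u b := by
      intro w hw
      rcases Set.mem_insert_iff.mp hw with rfl | hw
      · exact ⟨hub, le_rfl⟩
      · exact hw.1
    have hBbdd : BddBelow B := ⟨u, fun w hw => (hBsub hw).1⟩
    set v : ℝ := sInf B with hv
    have huv : u ≤ v := le_csInf hBne (fun w hw => (hBsub hw).1)
    have hvb : v ≤ b := csInf_le hBbdd (mem_insert _ _)
    -- pointwise facts
    have half_le : ∀ s : ℝ, S ≤ s → 1/2 ≤ s := fun s hs => by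
      have : 0 < T4⁻¹ := by positivity
      rw [hSdef] at hs; linarith
    have hAup : ∀ s, u < s → s ≤ b → g3 t c s < μ := by
      intro s h1 h2
      obtain ⟨w, hwA, hws⟩ := (csInf_lt_iff hAbdd hAne).mp h1
      rcases Set.mem_insert_iff.mp hwA with rfl | ⟨⟨hwS, _⟩, hwμ⟩
      · linarith
      · exact lt_trans (g3_lt t c ht (half_le w hwS) hws) hwμ
    have hulow : ∀ s, S ≤ s → s < u → μ ≤ g3 t c s := by
      intro s h1 h2
      by_contra hcon
      push_neg at hcon
      exact absurd (csInf_le hAbdd (Set.mem_insert_iff.mpr (Or.inr ⟨⟨h1, by linarith⟩, hcon⟩))) (not_le.mpr h2)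
    have hBup : ∀ s, v < s → s ≤ b → g3 t c s < -μ := by
      intro s h1 h2
      obtain ⟨w, hwB, hws⟩ := (csInf_lt_iff hBbdd hBne).mp h1
      rcases Set.mem_insert_iff.mp hwB with rfl | ⟨⟨hwu, _⟩, hwμ⟩
      · linarith
      · exact lt_trans (g3_lt t c ht (half_le w (le_trans hSu hwu)) hws) hwμ
    have hvlow : ∀ s, u ≤ s → s < v → -μ ≤ g3 t c s := by
      intro s h1 h2
      by_contra hcon
      push_neg at hcon
      exact absurd (csInf_le hBbdd (Set.mem_insert_iff.mpr (Or.inr ⟨⟨h1, by linarith⟩, hcon⟩))) (not_le.mpr h2)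
    -- endpoint facts by continuity
    have hgcont := (continuous_g3 t c).tendsto
    have hgu_ge : S < u → μ ≤ g3 t c u := by
      intro h
      refine ge_of_tendsto ((hgcont u).mono_left nhdsWithin_le_nhds)
        (Filter.eventually_of_mem (Ioo_mem_nhdsLT_of_mem (⟨h, le_rfl⟩ : u ∈ Ioc S u)) ?_)
      exact fun s hs => hulow s hs.1.le hs.2
    have hgu_le : u < b → g3 t c u ≤ μ := by
      intro h
      refine le_of_tendsto ((hgcont u).mono_left nhdsWithin_le_nhds)
        (Filter.eventually_of_mem (Ioo_mem_nhdsGT_of_mem (⟨le_rfl, h⟩ : u ∈ Ico u b)) ?_)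
      exact fun s hs => (hAup s hs.1 hs.2.le).le
    have hgv_ge : u < v → -μ ≤ g3 t c v := by
      intro h
      refine ge_of_tendsto ((hgcont v).mono_left nhdsWithin_le_nhds)
        (Filter.eventually_of_mem (Ioo_mem_nhdsLT_of_mem (⟨h, le_rfl⟩ : v ∈ Ioc u v)) ?_)
      exact fun s hs => hvlow s hs.1.le hs.2
    have hgv_le : v < b → g3 t c v ≤ -μ := by
      intro h
      refine le_of_tendsto ((hgcont v).mono_left nhdsWithin_le_nhds)
        (Filter.eventually_of_mem (Ioo_mem_nhdsGT_of_mem (⟨le_rfl, h⟩ : v ∈ Ico v b)) ?_)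
      exact fun s hs => (hBup s hs.1 hs.2.le).le
    clear_value u v
    -- the four pieces
    have I1 : ‖∫ s in a..S, F3 t x c s‖ ≤ T4⁻¹ := by
      have := htriv a S haS.le
      rw [hSdef] at this ⊢
      linarith
    have I2 : ‖∫ s in S..u, F3 t x c s‖ ≤ 4/μ := by
      rcases eq_or_lt_of_le hSu with heq | hlt
      · rw [← heq, intervalIntegral.integral_same]
        simp only [norm_zero]
        positivity
      · apply osc1 t x c μ S u ht hx hμ hlt.le hS12 hS0
        left
        intro s hs
        rcases lt_or_eq_of_le hs.2 with h | rfl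
        · exact hulow s hs.1 h
        · exact hgu_ge hlt
    have I3 : ‖∫ s in u..v, F3 t x c s‖ ≤ 2/μ := by
      rcases eq_or_lt_of_le huv with heq | hlt
      · rw [← heq, intervalIntegral.integral_same]
        simp only [norm_zero]
        positivity
      · have hvu2 : v - u ≤ 2/μ := by
          have hgub : g3 t c u ≤ μ := hgu_le (lt_of_lt_of_le hlt hvb)
          have hgvb : -μ ≤ g3 t c v := hgv_ge hlt
          -- FTC for g3
          have hFTC : ∫ s in u..v, ((48*s^2 - 4)*t) = g3 t c u - g3 t c v := by
            have hd : ∀ s ∈ uIcc u v, HasDerivAt (fun s => -(g3 t c s)) ((48*s^2 - 4)*t) s := by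
              intro s _
              exact (hasDerivAt_g3 t c s).neg.congr_deriv (by ring)
            have := intervalIntegral.integral_eq_sub_of_hasDerivAt hd
              (Continuous.intervalIntegrable (by fun_prop) u v)
            rw [this]; ring
          have hmono : lam * (v - u) ≤ ∫ s in u..v, ((48*s^2 - 4)*t) := by
            have h1 : ∫ s in u..v, lam = lam * (v - u) := by
              simp [intervalIntegral.integral_const, smul_eq_mul, mul_comm]
            rw [← h1]
            apply intervalIntegral.integral_mono_on huv
              intervalIntegrable_const (Continuous.intervalIntegrable (by fun_prop) u v)
            intro s hs
            have h2 : S ≤ s := le_trans hSu hs.1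
            rw [hlamdef]
            nlinarith [mul_nonneg (mul_nonneg (sub_nonneg.mpr h2)
              (by linarith : (0:ℝ) ≤ s + S)) ht.le]
          have h3 : lam * (v - u) ≤ 2*μ := by
            rw [hFTC] at hmono
            linarith
          rw [le_div_iff₀ hμ]
          nlinarith [h3, hμ2, hμ]
        have := htriv u v huv
        linarith
    have I4 : ‖∫ s in v..b, F3 t x c s‖ ≤ 4/μ := by
      rcases eq_or_lt_of_le hvb with heq | hlt
      · rw [heq, intervalIntegral.integral_same]
        simp only [norm_zero]
        positivity
      · have hSv : S ≤ v := le_trans hSu huv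
        have hv2 : 1/2 < v^2 := by nlinarith [hS12, hS0]
        have hv0 : 0 < v := lt_of_lt_of_le hS0 hSv
        apply osc1 t x c μ v b ht hx hμ hvb hv2 hv0
        right
        intro s hs
        rcases lt_or_eq_of_le hs.1 with h | heq
        · exact (hBup s h hs.2).le
        · rw [← heq]
          exact hgv_le hlt
    -- assemble the four pieces
    have hi : ∀ p q : ℝ, IntervalIntegrable (F3 t x c) MeasureTheory.volume p q :=
      fun p q => (continuous_F3 t x c).intervalIntegrable p q
    have hsplit : ∫ s in a..b, F3 t x c s =
        (((∫ s in a..S, F3 t x c s) + (∫ s in S..u, F3 t x c s))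
          + (∫ s in u..v, F3 t x c s)) + (∫ s in v..b, F3 t x c s) := by
      rw [intervalIntegral.integral_add_adjacent_intervals (hi a S) (hi S u),
        intervalIntegral.integral_add_adjacent_intervals (hi a u) (hi u v),
        intervalIntegral.integral_add_adjacent_intervals (hi a v) (hi v b)]
    rw [hsplit, hTinv]
    have hn : ‖(((∫ s in a..S, F3 t x c s) + (∫ s in S..u, F3 t x c s))
          + (∫ s in u..v, F3 t x c s)) + (∫ s in v..b, F3 t x c s)‖
        ≤ ((‖∫ s in a..S, F3 t x c s‖ + ‖∫ s in S..u, F3 t x c s‖)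
          + ‖∫ s in u..v, F3 t x c s‖) + ‖∫ s in v..b, F3 t x c s‖ := by
      refine (norm_add_le _ _).trans (add_le_add ?_ le_rfl)
      refine (norm_add_le _ _).trans (add_le_add ?_ le_rfl)
      exact norm_add_le _ _
    have h3 : 0 < T4⁻¹ := by positivity
    refine hn.trans ?_
    have h4 : 4/μ + 2/μ + 4/μ ≤ 10*(T4⁻¹/6) := by
      have : 4/μ + 2/μ + 4/μ = 10*(1/μ) := by ring
      rw [this]
      linarith [hinvμ]
    linarith [I1, I2, I3, I4, h4]

lemma F3_integrableOn (t x c : ℝ) (hx : 0 < x) :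
    IntegrableOn (F3 t x c) (Ioi (1/Real.sqrt 2)) volume := by
  have hsqrt2 : (0:ℝ) < Real.sqrt 2 := Real.sqrt_pos.mpr (by norm_num)
  set a : ℝ := 1/Real.sqrt 2 with ha
  have ha0 : 0 < a := by positivity
  have ha2 : a^2 = 1/2 := by
    rw [ha, div_pow, one_pow, Real.sq_sqrt (by norm_num : (2:ℝ) ≥ 0)]
  clear_value a
  apply Integrable.mono' (g := fun s => Real.exp (x*a) * Real.exp (-x*s))
  · exact (exp_neg_integrableOn_Ioi a hx).const_mul _
  · exact (continuous_F3 t x c).aestronglyMeasurable.restrict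
  · filter_upwards [ae_restrict_mem measurableSet_Ioi] with s hs
    have hsa : a < s := hs
    have hs2 : (0:ℝ) ≤ s^2 - 1/2 := by nlinarith
    have hr : s - a ≤ r3 s := by
      rw [r3, ← ha2]
      rw [Real.le_sqrt (by linarith) (by nlinarith)]
      nlinarith
    rw [norm_F3, ← Real.exp_add]
    apply Real.exp_le_exp.mpr
    nlinarith [mul_le_mul_of_nonneg_right hr hx.le]

theorem stmt_6 :
    ∃ C : ℝ, 0 < C ∧ ∀ t x y : ℝ, 0 < t → 0 < x →
      ‖∫ s in Ioi (1 / Real.sqrt 2 : ℝ),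
          Complex.exp (Complex.I * ((s * (x - y) : ℝ) - ((4*s^4 - 2*s^2 + 1/4) * t : ℝ))
            - (Real.sqrt (s^2 - 1/2) * x : ℝ))‖
        ≤ C * t ^ (-(1/4 : ℝ)) := by
  refine ⟨3, by norm_num, fun t x y ht hx => ?_⟩
  have hEq : (∫ s in Ioi (1 / Real.sqrt 2 : ℝ),
      Complex.exp (Complex.I * ((s * (x - y) : ℝ) - ((4*s^4 - 2*s^2 + 1/4) * t : ℝ))
        - (Real.sqrt (s^2 - 1/2) * x : ℝ)))
      = ∫ s in Ioi (1 / Real.sqrt 2 : ℝ), F3 t x (x - y) s := rfl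
  rw [hEq]
  have hlim := MeasureTheory.intervalIntegral_tendsto_integral_Ioi
    (1 / Real.sqrt 2 : ℝ) (F3_integrableOn t x (x - y) hx)
    (Filter.tendsto_id (α := ℝ) (x := Filter.atTop))
  refine le_of_tendsto hlim.norm ?_
  refine Filter.eventually_atTop.mpr ⟨1 / Real.sqrt 2, fun b hb => ?_⟩
  exact osc_finite t x (x - y) b ht hx hb
end
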